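/- arXiv:0904.3721 — 3 statements merged into one kernel-verified Lean document; each statement's English description precedes it below -/
import Mathlib

section
/- Let Ψ be a finite multiset of weights in an open half-space and let m^μ_{λ,Ψ}(q) = Σ_{w∈W} (-1)^{ℓ(w)} P_{Ψ,q}(w(λ+ρ) - (μ+ρ)) be the generalised Kostka–Foulkes polynomial. Then d/dq m^μ_{λ,Ψ}(q) = Σ_{γ∈Ψ} Σ_{n≥1} q^{n-1} m^{μ+nγ}_{λ,Ψ}(q). -/
noncomputable section
open Finset
open scoped RealInnerProductSpace

attribute [local instance] Classical.propDecidable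

/-- The finset of `ι`-tuples of naturals with sum `j`. -/
def tuples (ι : Type) [Fintype ι] (j : ℕ) : Finset (ι → ℕ) :=
  (Fintype.piFinset fun _ : ι => Finset.range (j + 1)).filter (fun c => ∑ i, c i = j)

/-- The `q`-analogue of the partition function attached to the multiset of weights
`a : ι → M`: the coefficient of `q^j` at `ν` is the number of ways to write `ν` as a sum
of `j` elements of the multiset. -/
def PPart {M : Type} [AddCommGroup M] {ι : Type} [Fintype ι] (a : ι → M) (ν : M) :
    PowerSeries ℤ :=
  PowerSeries.mk fun j => (((tuples ι j).filter (fun c => ∑ i, c i • a i = ν)).card : ℤ)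

variable (V : Type) [NormedAddCommGroup V] [InnerProductSpace ℝ V]

/-- Data of a (crystallographic, reduced) root system inside a real inner product space,
together with a linear functional `pol` (nonvanishing on roots) singling out the
positive roots. -/
structure RootSystemData where
  Δ : Finset V
  pol : V →ₗ[ℝ] ℝ
  nonzero : (0 : V) ∉ Δ
  neg_mem : ∀ α ∈ Δ, -α ∈ Δ
  reduced : ∀ α ∈ Δ, ∀ t : ℝ, t • α ∈ Δ → t = 1 ∨ t = -1
  crys : ∀ α ∈ Δ, ∀ β ∈ Δ, ∃ n : ℤ, 2 * ⟪α, β⟫ / ⟪α, α⟫ = (n : ℝ)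
  reflect_mem : ∀ α ∈ Δ, ∀ β ∈ Δ, β - (2 * ⟪α, β⟫ / ⟪α, α⟫) • α ∈ Δ
  pol_ne : ∀ α ∈ Δ, pol α ≠ 0

variable {V}

namespace RootSystemData

variable (R : RootSystemData V)

/-- The positive roots. -/
def pos : Finset V := R.Δ.filter (fun α => 0 < R.pol α)

/-- The short roots (roots of minimal length). -/
def short : Finset V := R.Δ.filter (fun α => ∀ β ∈ R.Δ, ‖α‖ ≤ ‖β‖)

/-- The long roots. -/
def long : Finset V := R.Δ.filter (fun α => ∃ β ∈ R.Δ, ‖β‖ < ‖α‖)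

/-- Short positive roots `Δ⁺_s`. -/
def posS : Finset V := R.pos ∩ R.short

/-- Long positive roots `Δ⁺_l`. -/
def posL : Finset V := R.pos ∩ R.long

/-- The simple roots: indecomposable positive roots. -/
def simples : Finset V := R.pos.filter (fun α => ¬ ∃ β ∈ R.pos, ∃ γ ∈ R.pos, β + γ = α)

/-- Short simple roots `Π_s`. -/
def simplesS : Finset V := R.simples ∩ R.short

/-- Long simple roots `Π_l`. -/
def simplesL : Finset V := R.simples ∩ R.long

/-- `ρ`, the half-sum of positive roots. -/
def rho : V := (2 : ℝ)⁻¹ • ∑ α ∈ R.pos, α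

/-- `ρ_s`, the half-sum of short positive roots. -/
def rhoS : V := (2 : ℝ)⁻¹ • ∑ α ∈ R.posS, α

/-- `ρ_l`, the half-sum of long positive roots. -/
def rhoL : V := (2 : ℝ)⁻¹ • ∑ α ∈ R.posL, α

/-- `g` is the orthogonal reflection in (the hyperplane orthogonal to) some `α ∈ S`. -/
def IsReflectionIn (S : Finset V) (g : V ≃ₗ[ℝ] V) : Prop :=
  ∃ α ∈ S, ∀ x : V, g x = x - (2 * ⟪α, x⟫ / ⟪α, α⟫) • α

/-- The Weyl group `W`, generated by all root reflections. -/
def weyl : Subgroup (V ≃ₗ[ℝ] V) := Subgroup.closure {g | IsReflectionIn R.Δ g}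

/-- `W_l`, the subgroup generated by reflections in long roots. -/
def weylL : Subgroup (V ≃ₗ[ℝ] V) := Subgroup.closure {g | IsReflectionIn R.long g}

/-- `W(Π_s)`, the subgroup generated by reflections in short simple roots. -/
def weylS : Subgroup (V ≃ₗ[ℝ] V) := Subgroup.closure {g | IsReflectionIn R.simplesS g}

/-- The length `ℓ(w)` of an element, as the number of inversions:
positive roots sent to negative roots. -/
def len (w : V ≃ₗ[ℝ] V) : ℕ := (R.pos.filter (fun α => -(w α) ∈ R.pos)).card

/-- Dominant weights. -/
def Dominant (μ : V) : Prop := ∀ α ∈ R.pos, 0 ≤ ⟪μ, α⟫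

/-- `H`-dominant weights: dominant with respect to the long positive roots. -/
def DominantL (μ : V) : Prop := ∀ α ∈ R.posL, 0 ≤ ⟪μ, α⟫

/-- The root system is irreducible. -/
def IsIrreducible : Prop :=
  ¬ ∃ S T : Finset V, S.Nonempty ∧ T.Nonempty ∧ S ∪ T = R.Δ ∧
    ∀ α ∈ S, ∀ β ∈ T, ⟪α, β⟫ = 0

/-- The root system has two root lengths. -/
def TwoLengths : Prop := ∃ α ∈ R.Δ, ∃ β ∈ R.Δ, ‖α‖ ≠ ‖β‖

/-- The roots span `V`. -/
def Spans : Prop := Submodule.span ℝ (R.Δ : Set V) = ⊤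

/-- `μ ≼ ν` in the root order: `ν - μ` is a non-negative integer combination of
positive roots. -/
def rootLE (μ ν : V) : Prop := ∃ c : R.pos → ℕ, ν - μ = ∑ α : R.pos, c α • (α : V)

/-- The generalised Kostka–Foulkes polynomial `m^μ_{λ,Ψ}(q)` attached to the multiset of
weights `a : ι → V`. -/
def genKF {ι : Type} [Fintype ι] (a : ι → V) [Fintype R.weyl] (lam mu : V) :
    PowerSeries ℤ :=
  ∑ w : R.weyl, ((-1 : ℤ) ^ R.len (w : V ≃ₗ[ℝ] V)) •
    PPart a ((w : V ≃ₗ[ℝ] V) (lam + R.rho) - (mu + R.rho))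

/-- The short `q`-analogue `m̄^μ_λ(q)`. -/
def mbar [Fintype R.weyl] (lam mu : V) : PowerSeries ℤ :=
  R.genKF (fun α : R.posS => (α : V)) lam mu

/-- Lusztig's `q`-analogue `m^μ_λ(q)`. -/
def mfull [Fintype R.weyl] (lam mu : V) : PowerSeries ℤ :=
  R.genKF (fun α : R.pos => (α : V)) lam mu

/-- The weight multiplicity `m_λ^μ` of `μ` in the simple module `V_λ`, via Kostant's
multiplicity formula (`q = 1` value of Lusztig's `q`-analogue), for the partition
function attached to an arbitrary multiset of weights `a : ι → V`. -/
def mult1 [Fintype R.weyl] {ι : Type} [Fintype ι] (a : ι → V) (lam mu : V) : ℤ :=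
  ∑ w : R.weyl, ((-1 : ℤ) ^ R.len (w : V ≃ₗ[ℝ] V)) *
    (Nat.card {c : ι → ℕ // ∑ i, c i • a i = (w : V ≃ₗ[ℝ] V) (lam + R.rho) - (mu + R.rho)} : ℤ)

/-- `e^μ`, a basis element of the group algebra of the weight lattice. -/
def expo {k : Type} [CommRing k] (μ : V) : AddMonoidAlgebra k V := AddMonoidAlgebra.single μ 1

/-- The skew-symmetrisation operator `J = Σ_{w ∈ W} (-1)^{ℓ(w)} w`. -/
def Jop {k : Type} [CommRing k] [Fintype R.weyl] (a : AddMonoidAlgebra k V) :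
    AddMonoidAlgebra k V :=
  ∑ w : R.weyl, ((-1 : ℤ) ^ R.len (w : V ≃ₗ[ℝ] V)) •
    AddMonoidAlgebra.mapDomain (⇑(w : V ≃ₗ[ℝ] V)) a

end RootSystemData


section Aux

lemma aux_mem_tuples {ι : Type} [Fintype ι] {j : ℕ} {c : ι → ℕ} :
    c ∈ tuples ι j ↔ ∑ i, c i = j := by
  constructor
  · intro h; exact (Finset.mem_filter.mp h).2
  · intro h
    refine Finset.mem_filter.mpr ⟨Fintype.mem_piFinset.mpr fun i => ?_, h⟩
    rw [Finset.mem_range, Nat.lt_succ_iff, ← h]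
    exact Finset.single_le_sum (fun i _ => Nat.zero_le _) (Finset.mem_univ i)

lemma aux_key {M : Type} [AddCommGroup M] {ι : Type} [Fintype ι] (a : ι → M) (ν : M) (j : ℕ) :
    (j + 1) * ((tuples ι (j + 1)).filter (fun c => ∑ i, c i • a i = ν)).card
    = ∑ i : ι, ∑ n ∈ Finset.Icc 1 (j + 1),
        ((tuples ι (j + 1 - n)).filter (fun c => ∑ i', c i' • a i' = ν - n • a i)).card := by
  set S := (tuples ι (j + 1)).filter (fun c => ∑ i, c i • a i = ν) with hS
  clear_value S
  have hsum : ∀ c ∈ S, ∑ i, c i = j + 1 := by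
    intro c hc; rw [hS] at hc; exact aux_mem_tuples.mp (Finset.mem_filter.mp hc).1
  have stepA : (j + 1) * S.card = ∑ i : ι, ∑ c ∈ S, c i := by
    rw [← Finset.sum_comm, mul_comm, ← smul_eq_mul, ← Finset.sum_const]
    exact (Finset.sum_congr rfl hsum).symm
  rw [stepA]
  clear stepA
  refine Finset.sum_congr rfl fun i _ => ?_
  have expandN : ∀ (c : ι → ℕ), ∑ i', c i' = c i + ∑ i' ∈ Finset.univ.erase i, c i' :=
    fun c => (Finset.add_sum_erase _ c (Finset.mem_univ i)).symm
  have expandM : ∀ (c : ι → ℕ), ∑ i', c i' • a i'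
      = c i • a i + ∑ i' ∈ Finset.univ.erase i, c i' • a i' :=
    fun c => (Finset.add_sum_erase _ (fun i' => c i' • a i') (Finset.mem_univ i)).symm
  have updEraseN : ∀ (c : ι → ℕ) (b : ℕ),
      ∑ i' ∈ Finset.univ.erase i, Function.update c i b i' = ∑ i' ∈ Finset.univ.erase i, c i' := by
    intro c b
    refine Finset.sum_congr rfl fun x hx => ?_
    rw [Function.update_of_ne (Finset.ne_of_mem_erase hx)]
  have updEraseM : ∀ (c : ι → ℕ) (b : ℕ),
      ∑ i' ∈ Finset.univ.erase i, Function.update c i b i' • a i'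
        = ∑ i' ∈ Finset.univ.erase i, c i' • a i' := by
    intro c b
    refine Finset.sum_congr rfl fun x hx => ?_
    rw [Function.update_of_ne (Finset.ne_of_mem_erase hx)]
  have stepB : ∑ c ∈ S, c i = ∑ n ∈ Finset.Icc 1 (j + 1), (S.filter (fun c => n ≤ c i)).card := by
    simp_rw [Finset.card_filter]
    rw [Finset.sum_comm]
    refine Finset.sum_congr rfl fun c hc => ?_
    have hci : c i ≤ j + 1 := by
      rw [← hsum c hc]
      exact Finset.single_le_sum (fun i _ => Nat.zero_le _) (Finset.mem_univ i)
    have hfil : (Finset.Icc 1 (j+1)).filter (fun n => n ≤ c i) = Finset.Icc 1 (c i) := by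
      ext n; simp only [Finset.mem_filter, Finset.mem_Icc]; omega
    rw [← Finset.card_filter, hfil, Nat.card_Icc]
    omega
  rw [stepB]
  clear stepB
  refine Finset.sum_congr rfl fun n hn => ?_
  rw [Finset.mem_Icc] at hn
  refine Finset.card_bij' (fun c _ => Function.update c i (c i - n))
    (fun c _ => Function.update c i (c i + n)) ?_ ?_ ?_ ?_
  · intro c hc
    obtain ⟨hcS, hni⟩ := Finset.mem_filter.mp hc
    rw [hS] at hcS
    obtain ⟨hct, hcw⟩ := Finset.mem_filter.mp hcS
    have hct' := aux_mem_tuples.mp hct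
    rw [expandN] at hct'
    rw [expandM] at hcw
    refine Finset.mem_filter.mpr ⟨aux_mem_tuples.mpr ?_, ?_⟩
    · rw [expandN, updEraseN]
      simp only [Function.update_self]
      omega
    · rw [expandM, updEraseM]
      simp only [Function.update_self]
      rw [sub_nsmul _ hni, ← hcw]
      abel
  · intro c hc
    obtain ⟨hct, hcw⟩ := Finset.mem_filter.mp hc
    have hct' := aux_mem_tuples.mp hct
    rw [expandN] at hct'
    rw [expandM] at hcw
    have hcw' : ν = (c i • a i + ∑ i' ∈ Finset.univ.erase i, c i' • a i') + n • a i :=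
      (sub_eq_iff_eq_add.mp hcw.symm)
    rw [hS]
    refine Finset.mem_filter.mpr ⟨Finset.mem_filter.mpr ⟨aux_mem_tuples.mpr ?_, ?_⟩, ?_⟩
    · rw [expandN, updEraseN]
      simp only [Function.update_self]
      omega
    · rw [expandM, updEraseM]
      simp only [Function.update_self]
      rw [add_nsmul, hcw']
      abel
    · simp [Function.update_self]
  · intro c hc
    have hni := (Finset.mem_filter.mp hc).2
    funext x
    by_cases hx : x = i
    · subst hx
      simp only [Function.update_self]
      omega
    · simp [Function.update_of_ne hx]
  · intro c hc
    funext x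
    by_cases hx : x = i
    · subst hx; simp [Function.update_self]
    · simp [Function.update_of_ne hx]

end Aux

/-- For a finite multiset `Ψ = (a i)` of weights in an open half-space,
the generalised Kostka–Foulkes polynomial
`m^μ_{λ,Ψ}(q) = Σ_{w∈W} (-1)^{ℓ(w)} P_{Ψ,q}(w(λ+ρ) - (μ+ρ))` satisfies
`d/dq m^μ_{λ,Ψ}(q) = Σ_{γ∈Ψ} Σ_{n≥1} q^{n-1} m^{μ+nγ}_{λ,Ψ}(q)`. -/
theorem statement1 {V : Type} [NormedAddCommGroup V] [InnerProductSpace ℝ V]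
    (R : RootSystemData V) [Fintype R.weyl]
    {ι : Type} [Fintype ι] (a : ι → V)
    (hhalf : ∃ f : V →ₗ[ℝ] ℝ, ∀ i, 0 < f (a i))
    (lam mu : V) (hlam : R.Dominant lam) :
    PowerSeries.derivative ℤ (R.genKF a lam mu) =
      ∑ i : ι, PowerSeries.mk (fun j : ℕ =>
        ∑ n ∈ Finset.Icc 1 (j + 1),
          PowerSeries.coeff (R := ℤ) (j + 1 - n) (R.genKF a lam (mu + n • a i))) := by
  ext j
  have hcoeff : ∀ (k : ℕ) (mu' : V), (PowerSeries.coeff (R := ℤ) k) (R.genKF a lam mu')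
      = ∑ w : R.weyl, (-1 : ℤ) ^ R.len (w : V ≃ₗ[ℝ] V) *
          (((tuples ι k).filter
            (fun c => ∑ i, c i • a i = (w : V ≃ₗ[ℝ] V) (lam + R.rho) - (mu' + R.rho))).card : ℤ) := by
    intro k mu'
    rw [RootSystemData.genKF, map_sum]
    refine Finset.sum_congr rfl fun w _ => ?_
    rw [map_zsmul, smul_eq_mul, PPart, PowerSeries.coeff_mk]
  have htgt : ∀ (w : V ≃ₗ[ℝ] V) (i : ι) (n : ℕ),
      w (lam + R.rho) - ((mu + n • a i) + R.rho)
        = (w (lam + R.rho) - (mu + R.rho)) - n • a i := by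
    intro w i n
    rw [add_right_comm, ← sub_sub]
  rw [PowerSeries.coeff_derivative, hcoeff, map_sum]
  simp_rw [PowerSeries.coeff_mk, hcoeff, htgt]
  rw [Finset.sum_mul]
  calc ∑ w : R.weyl, (-1 : ℤ) ^ R.len (w : V ≃ₗ[ℝ] V) *
          (((tuples ι (j+1)).filter
            (fun c => ∑ i, c i • a i = (w : V ≃ₗ[ℝ] V) (lam + R.rho) - (mu + R.rho))).card : ℤ)
          * ((j : ℤ) + 1)
      = ∑ w : R.weyl, (-1 : ℤ) ^ R.len (w : V ≃ₗ[ℝ] V) *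
          (∑ i : ι, ∑ n ∈ Finset.Icc 1 (j + 1),
            (((tuples ι (j + 1 - n)).filter
              (fun c => ∑ i', c i' • a i'
                = ((w : V ≃ₗ[ℝ] V) (lam + R.rho) - (mu + R.rho)) - n • a i)).card : ℤ)) := by
        refine Finset.sum_congr rfl fun w _ => ?_
        rw [mul_assoc]
        congr 1
        have := aux_key a ((w : V ≃ₗ[ℝ] V) (lam + R.rho) - (mu + R.rho)) j
        have h2 : (((j : ℤ) + 1) *
            (((tuples ι (j+1)).filter
              (fun c => ∑ i, c i • a i = (w : V ≃ₗ[ℝ] V) (lam + R.rho) - (mu + R.rho))).card : ℤ))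
            = ∑ i : ι, ∑ n ∈ Finset.Icc 1 (j + 1),
              (((tuples ι (j + 1 - n)).filter
                (fun c => ∑ i', c i' • a i'
                  = ((w : V ≃ₗ[ℝ] V) (lam + R.rho) - (mu + R.rho)) - n • a i)).card : ℤ) := by
          exact_mod_cast congrArg (Nat.cast : ℕ → ℤ) this
        rw [mul_comm] at h2
        exact h2
    _ = ∑ i : ι, ∑ n ∈ Finset.Icc 1 (j + 1), ∑ w : R.weyl,
          (-1 : ℤ) ^ R.len (w : V ≃ₗ[ℝ] V) *
          (((tuples ι (j + 1 - n)).filter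
            (fun c => ∑ i', c i' • a i'
              = ((w : V ≃ₗ[ℝ] V) (lam + R.rho) - (mu + R.rho)) - n • a i)).card : ℤ) := by
        simp_rw [Finset.mul_sum]
        rw [Finset.sum_comm]
        exact Finset.sum_congr rfl fun i _ => Finset.sum_comm
end
end

section
/- Let Δ be a reduced irreducible root system with two root lengths, W its Weyl group, W_l the subgroup generated by all reflections in long roots, and W(Π_s) the subgroup generated by the reflections in short simple roots. Then W_l is normal in W and W is the semi-direct product W(Π_s) ⋉ W_l. -/
noncomputable section
open Finset
open scoped RealInnerProductSpace

attribute [local instance] Classical.propDecidable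

variable (V : Type) [NormedAddCommGroup V] [InnerProductSpace ℝ V]

variable {V}

namespace RSD

variable {V : Type} [NormedAddCommGroup V] [InnerProductSpace ℝ V]

/-- the underlying linear map of a reflection -/
def reflMap (α : V) : V →ₗ[ℝ] V :=
    { toFun := fun x => x - (2 * ⟪α, x⟫ / ⟪α, α⟫) • α
      map_add' := by
        intro x y
        simp only [inner_add_right]
        rw [show (2 * (⟪α, x⟫ + ⟪α, y⟫) / ⟪α, α⟫) = 2 * ⟪α, x⟫ / ⟪α, α⟫ + 2 * ⟪α, y⟫ / ⟪α, α⟫ by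
          ring]
        rw [add_smul]; abel
      map_smul' := by
        intro c x
        simp only [real_inner_smul_right, RingHom.id_apply, smul_sub]
        rw [show (2 * (c * ⟪α, x⟫) / ⟪α, α⟫) = c * (2 * ⟪α, x⟫ / ⟪α, α⟫) by ring, mul_smul] }

lemma reflMap_apply (α x : V) : reflMap α x = x - (2 * ⟪α, x⟫ / ⟪α, α⟫) • α := rfl

lemma reflMap_invol (α : V) : Function.Involutive (reflMap α) := by
      intro x
      by_cases hα : α = 0
      · subst hα; rw [reflMap_apply, reflMap_apply]; simp
      have hA : ⟪α, α⟫ ≠ 0 := fun h => hα (inner_self_eq_zero.mp h)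
      rw [reflMap_apply, reflMap_apply, inner_sub_right, real_inner_smul_right]
      rw [show 2 * (⟪α, x⟫ - 2 * ⟪α, x⟫ / ⟪α, α⟫ * ⟪α, α⟫) / ⟪α, α⟫
          = -(2 * ⟪α, x⟫ / ⟪α, α⟫) by field_simp; ring]
      rw [neg_smul]
      abel

/-- reflection in a vector -/
def refl (α : V) : V ≃ₗ[ℝ] V := LinearEquiv.ofInvolutive (reflMap α) (reflMap_invol α)

lemma refl_refl (α x : V) : refl α (refl α x) = x := reflMap_invol α x

lemma refl_apply (α x : V) : refl α x = x - (2 * ⟪α, x⟫ / ⟪α, α⟫) • α := rfl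

lemma refl_self (α : V) (hα : α ≠ 0) : refl α α = -α := by
  have hA : ⟪α, α⟫ ≠ 0 := fun h => hα (inner_self_eq_zero.mp h)
  rw [refl_apply, show (2 * ⟪α, α⟫ / ⟪α, α⟫ : ℝ) = 2 by field_simp]
  rw [two_smul]; abel

lemma refl_inner (α x y : V) : ⟪refl α x, refl α y⟫ = ⟪x, y⟫ := by
  by_cases hα : α = 0
  · subst hα; rw [refl_apply, refl_apply]; simp
  have hA : ⟪α, α⟫ ≠ 0 := fun h => hα (inner_self_eq_zero.mp h)
  simp only [refl_apply, inner_sub_left, inner_sub_right, real_inner_smul_left,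
    real_inner_smul_right]
  rw [real_inner_comm x α, real_inner_comm y α]
  field_simp
  ring

lemma refl_inv (α : V) : (refl α)⁻¹ = refl α := by
  ext x
  show (refl α).symm x = refl α x
  apply (refl α).injective
  rw [(refl α).apply_symm_apply, refl_refl]

/-CHUNK2-/
lemma mul_apply (f g : V ≃ₗ[ℝ] V) (x : V) : (f * g) x = f (g x) := rfl

lemma inv_apply (f : V ≃ₗ[ℝ] V) (x : V) : f⁻¹ x = f.symm x := rfl

lemma refl_neg (α : V) : refl (-α) = refl α := by
  ext x
  rw [refl_apply, refl_apply]
  rw [inner_neg_neg, inner_neg_left, smul_neg, mul_neg, neg_div, neg_smul, neg_neg]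

lemma conj_refl (g : V ≃ₗ[ℝ] V) (hg : ∀ x y, ⟪g x, g y⟫ = ⟪x, y⟫) (α : V) :
    g * refl α * g⁻¹ = refl (g α) := by
  ext x
  rw [mul_apply, mul_apply, refl_apply, refl_apply, map_sub, map_smul]
  rw [inv_apply, g.apply_symm_apply]
  have h1 : ⟪g α, g α⟫ = ⟪α, α⟫ := hg α α
  have h2 : ⟪α, g.symm x⟫ = ⟪g α, x⟫ := by
    rw [← hg α (g.symm x), g.apply_symm_apply]
  rw [h1, h2]

variable (R : RootSystemData V)

lemma root_ne_zero {α : V} (hα : α ∈ R.Δ) : α ≠ 0 := fun h => R.nonzero (h ▸ hα)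

lemma root_inner_pos {α : V} (hα : α ∈ R.Δ) : (0:ℝ) < ⟪α, α⟫ :=
  lt_of_le_of_ne real_inner_self_nonneg
    (fun h => root_ne_zero R hα (inner_self_eq_zero.mp h.symm))

lemma refl_root_mem {α β : V} (hα : α ∈ R.Δ) (hβ : β ∈ R.Δ) : refl α β ∈ R.Δ := by
  rw [refl_apply]; exact R.reflect_mem α hα β hβ

lemma isReflectionIn_iff {S : Finset V} {g : V ≃ₗ[ℝ] V} :
    RootSystemData.IsReflectionIn S g ↔ ∃ α ∈ S, g = refl α := by
  constructor
  · rintro ⟨α, hα, h⟩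
    exact ⟨α, hα, by ext x; rw [h x, refl_apply]⟩
  · rintro ⟨α, hα, rfl⟩
    exact ⟨α, hα, fun x => rfl⟩

/-- The subgroup of linear automorphisms preserving the inner product and the root set. -/
def Ogrp : Subgroup (V ≃ₗ[ℝ] V) where
  carrier := {g | (∀ x y, ⟪g x, g y⟫ = ⟪x, y⟫) ∧ ∀ α ∈ R.Δ, g α ∈ R.Δ}
  one_mem' := ⟨fun _ _ => rfl, fun _ h => h⟩
  mul_mem' := by
    rintro f g ⟨hfi, hfd⟩ ⟨hgi, hgd⟩
    exact ⟨fun x y => by rw [mul_apply, mul_apply, hfi, hgi],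
      fun α hα => by rw [mul_apply]; exact hfd _ (hgd _ hα)⟩
  inv_mem' := by
    rintro g ⟨hgi, hgd⟩
    constructor
    · intro x y
      rw [← hgi (g⁻¹ x) (g⁻¹ y), inv_apply, inv_apply, g.apply_symm_apply, g.apply_symm_apply]
    · intro β hβ
      have himg : R.Δ.image g = R.Δ := by
        apply Finset.eq_of_subset_of_card_le
        · intro x hx
          obtain ⟨α, hα, rfl⟩ := Finset.mem_image.mp hx
          exact hgd α hα
        · rw [Finset.card_image_of_injective _ g.injective]
      obtain ⟨α, hα, hgα⟩ := Finset.mem_image.mp (himg ▸ hβ)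
      rw [inv_apply, ← hgα, g.symm_apply_apply]
      exact hα

lemma refl_mem_Ogrp {α : V} (hα : α ∈ R.Δ) : refl α ∈ Ogrp R :=
  ⟨refl_inner α, fun _ hβ => refl_root_mem R hα hβ⟩

lemma weyl_le_Ogrp : R.weyl ≤ Ogrp R := by
  apply Subgroup.closure_le _ |>.mpr
  rintro g hg
  obtain ⟨α, hα, rfl⟩ := isReflectionIn_iff.mp hg
  exact refl_mem_Ogrp R hα

lemma pos_subset : R.pos ⊆ R.Δ := Finset.filter_subset _ _

lemma pol_pos_of_mem {α : V} (hα : α ∈ R.pos) : 0 < R.pol α := (Finset.mem_filter.mp hα).2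

lemma mem_pos_of {α : V} (hα : α ∈ R.Δ) (h : 0 < R.pol α) : α ∈ R.pos :=
  Finset.mem_filter.mpr ⟨hα, h⟩

lemma pos_or_neg_pos {α : V} (hα : α ∈ R.Δ) : α ∈ R.pos ∨ -α ∈ R.pos := by
  rcases (R.pol_ne α hα).lt_or_gt with h | h
  · right
    exact mem_pos_of R (R.neg_mem α hα) (by rw [map_neg]; linarith)
  · left; exact mem_pos_of R hα h

lemma not_neg_mem_pos {α : V} (hα : α ∈ R.pos) : -α ∉ R.pos := by
  intro h
  have h1 := pol_pos_of_mem R hα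
  have h2 := pol_pos_of_mem R h
  rw [map_neg] at h2
  linarith

/-CHUNK3-/
lemma simples_subset_pos : R.simples ⊆ R.pos := Finset.filter_subset _ _

lemma pol_induction (P : V → Prop)
    (h : ∀ β ∈ R.pos, (∀ γ ∈ R.pos, R.pol γ < R.pol β → P γ) → P β) :
    ∀ β ∈ R.pos, P β := by
  suffices H : ∀ n : ℕ, ∀ β ∈ R.pos,
      (R.pos.filter (fun γ => R.pol γ < R.pol β)).card ≤ n → P β by
    intro β hβ; exact H _ β hβ le_rfl
  intro n
  induction n with
  | zero =>
    intro β hβ hc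
    refine h β hβ fun γ hγ hlt => ?_
    exfalso
    have : 0 < (R.pos.filter fun γ => R.pol γ < R.pol β).card :=
      Finset.card_pos.mpr ⟨γ, Finset.mem_filter.mpr ⟨hγ, hlt⟩⟩
    omega
  | succ n ih =>
    intro β hβ hc
    refine h β hβ fun γ hγ hlt => ih γ hγ ?_
    have hmem : γ ∈ R.pos.filter (fun δ => R.pol δ < R.pol β) :=
      Finset.mem_filter.mpr ⟨hγ, hlt⟩
    have hsub : R.pos.filter (fun δ => R.pol δ < R.pol γ) ⊆
        (R.pos.filter (fun δ => R.pol δ < R.pol β)).erase γ := by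
      intro δ hδ
      rw [Finset.mem_filter] at hδ
      refine Finset.mem_erase.mpr ⟨?_, Finset.mem_filter.mpr ⟨hδ.1, lt_trans hδ.2 hlt⟩⟩
      rintro rfl; exact lt_irrefl _ hδ.2
    have h1 := Finset.card_le_card hsub
    have h2 := Finset.card_erase_of_mem hmem
    have h3 := Finset.card_pos.mpr ⟨γ, hmem⟩
    omega

lemma exists_decomp {β : V} (hβ : β ∈ R.pos) (hns : β ∉ R.simples) :
    ∃ γ ∈ R.pos, ∃ δ ∈ R.pos, γ + δ = β := by
  by_contra h
  exact hns (Finset.mem_filter.mpr ⟨hβ, h⟩)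

/-- nonnegative combination of simple roots -/
def NN (R : RootSystemData V) (β : V) : Prop :=
  ∃ c : V → ℝ, (∀ γ, 0 ≤ c γ) ∧ β = ∑ γ ∈ R.simples, c γ • γ

lemma pos_isNN : ∀ β ∈ R.pos, NN R β := by
  apply pol_induction
  intro β hβ ih
  by_cases hs : β ∈ R.simples
  · refine ⟨fun γ => if γ = β then 1 else 0, fun γ => by positivity, ?_⟩
    rw [Finset.sum_congr rfl (fun γ _ => by rw [ite_smul, one_smul, zero_smul])]
    rw [Finset.sum_ite_eq' R.simples β (fun γ => γ), if_pos hs]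
  · obtain ⟨γ, hγ, δ, hδ, hsum⟩ := exists_decomp R hβ hs
    have hpols : R.pol γ + R.pol δ = R.pol β := by rw [← hsum, map_add]
    have hγp := pol_pos_of_mem R hγ
    have hδp := pol_pos_of_mem R hδ
    obtain ⟨c, hc, hcsum⟩ := ih γ hγ (by linarith)
    obtain ⟨d, hd, hdsum⟩ := ih δ hδ (by linarith)
    refine ⟨fun x => c x + d x, fun x => add_nonneg (hc x) (hd x), ?_⟩
    rw [← hsum, hcsum, hdsum, ← Finset.sum_add_distrib]
    exact Finset.sum_congr rfl fun x _ => (add_smul _ _ _).symm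

lemma sub_mem_of_inner_pos {α β : V} (hα : α ∈ R.Δ) (hβ : β ∈ R.Δ) (hne : β ≠ α)
    (hne' : β ≠ -α) (hip : 0 < ⟪α, β⟫) : α - β ∈ R.Δ := by
  obtain ⟨m, hm⟩ := R.crys α hα β hβ
  obtain ⟨n, hn⟩ := R.crys β hβ α hα
  have hA := root_inner_pos R hα
  have hB := root_inner_pos R hβ
  have hip' : 0 < ⟪β, α⟫ := by rwa [real_inner_comm]
  have hmpos : (0:ℝ) < m := hm ▸ by positivity
  have hnpos : (0:ℝ) < n := hn ▸ by positivity
  have hm1 : (0:ℤ) < m := by exact_mod_cast hmpos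
  have hn1 : (0:ℤ) < n := by exact_mod_cast hnpos
  -- strict Cauchy-Schwarz
  have hCS : ⟪α, β⟫ * ⟪α, β⟫ < ⟪α, α⟫ * ⟪β, β⟫ := by
    rcases lt_or_eq_of_le (real_inner_mul_inner_self_le α β) with h | h
    · exact h
    · exfalso
      have habs : ‖⟪α, β⟫‖ = ‖α‖ * ‖β‖ := by
        rw [Real.norm_eq_abs, ← abs_of_nonneg (mul_nonneg (norm_nonneg α) (norm_nonneg β)),
          ← sq_eq_sq_iff_abs_eq_abs]
        rw [mul_pow, ← real_inner_self_eq_norm_sq, ← real_inner_self_eq_norm_sq, sq]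
        exact h
      obtain ⟨r, hr0, hrβ⟩ := (norm_inner_eq_norm_iff (𝕜 := ℝ)
        (root_ne_zero R hα) (root_ne_zero R hβ)).mp habs
      rcases R.reduced α hα r (hrβ ▸ hβ) with h1 | h1
      · exact hne (by rw [hrβ, h1, one_smul])
      · exact hne' (by rw [hrβ, h1, neg_one_smul])
  have hprod : (m:ℝ) * n < 4 := by
    rw [← hm, ← hn]
    rw [div_mul_div_comm]
    rw [div_lt_iff₀ (by positivity)]
    have hcomm : ⟪β, α⟫ = ⟪α, β⟫ := real_inner_comm α β
    rw [hcomm]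
    nlinarith [hCS]
  have hprod' : m * n < 4 := by exact_mod_cast hprod
  have : m = 1 ∨ n = 1 := by
    by_contra hc
    push_neg at hc
    have : 2 ≤ m := by omega
    have : 2 ≤ n := by omega
    nlinarith
  rcases this with h1 | h1
  · -- refl α β = β - α ∈ Δ
    have := R.reflect_mem α hα β hβ
    rw [hm, h1] at this
    simp only [Int.cast_one, one_smul] at this
    have := R.neg_mem _ this
    rwa [neg_sub] at this
  · have := R.reflect_mem β hβ α hα
    rw [hn, h1] at this
    simp only [Int.cast_one, one_smul] at this
    exact this

lemma simples_inner_nonpos {α β : V} (hα : α ∈ R.simples) (hβ : β ∈ R.simples)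
    (hne : α ≠ β) : ⟪α, β⟫ ≤ 0 := by
  by_contra h
  push_neg at h
  have hαp := simples_subset_pos R hα
  have hβp := simples_subset_pos R hβ
  have hαΔ := pos_subset R hαp
  have hβΔ := pos_subset R hβp
  have hne2 : β ≠ -α := by
    rintro rfl
    exact not_neg_mem_pos R hαp hβp
  have hsub : α - β ∈ R.Δ := sub_mem_of_inner_pos R hαΔ hβΔ (fun h' => hne h'.symm) hne2 h
  rcases pos_or_neg_pos R hsub with hp | hp
  · -- α = β + (α - β) decomposable
    have : ¬ ∃ x ∈ R.pos, ∃ y ∈ R.pos, x + y = α := (Finset.mem_filter.mp hα).2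
    exact this ⟨β, hβp, α - β, hp, by abel⟩
  · rw [neg_sub] at hp
    have : ¬ ∃ x ∈ R.pos, ∃ y ∈ R.pos, x + y = β := (Finset.mem_filter.mp hβ).2
    exact this ⟨α, hαp, β - α, hp, by abel⟩

lemma simples_sum_eq_zero {c : V → ℝ} (h : ∑ γ ∈ R.simples, c γ • γ = 0) :
    ∀ γ ∈ R.simples, c γ = 0 := by
  classical
  set Pp := R.simples.filter (fun γ => 0 < c γ) with hPp
  set Pn := R.simples.filter (fun γ => c γ < 0) with hPn
  have hkey : (∑ γ ∈ Pp, c γ • γ) + (∑ γ ∈ Pn, c γ • γ) = 0 := by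
    rw [← Finset.sum_filter_add_sum_filter_not R.simples (fun γ => 0 < c γ)
      (fun γ => c γ • γ)] at h
    have h2 : ∑ γ ∈ R.simples.filter (fun γ => ¬ 0 < c γ), c γ • γ = ∑ γ ∈ Pn, c γ • γ := by
      refine (Finset.sum_subset ?_ ?_).symm
      · intro x hx
        rw [Finset.mem_filter] at hx ⊢
        exact ⟨hx.1, not_lt.mpr (le_of_lt hx.2)⟩
      · intro x hx hnx
        rw [Finset.mem_filter] at hx
        rw [hPn, Finset.mem_filter] at hnx
        have : c x = 0 := le_antisymm (not_lt.mp hx.2) (not_lt.mp fun hlt => hnx ⟨hx.1, hlt⟩)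
        rw [this, zero_smul]
    rw [h2] at h
    exact h
  set v := ∑ γ ∈ Pp, c γ • γ with hv
  have hsplit : v = ∑ γ ∈ Pn, (-(c γ)) • γ := by
    rw [eq_neg_of_add_eq_zero_left hkey, ← Finset.sum_neg_distrib]
    exact Finset.sum_congr rfl fun γ _ => (neg_smul _ _).symm
  have hvv : ⟪v, v⟫ ≤ 0 := by
    nth_rewrite 2 [hsplit]
    rw [hv, sum_inner]
    refine Finset.sum_nonpos fun γ hγ => ?_
    rw [real_inner_smul_left, inner_sum]
    rw [Finset.mem_filter] at hγ
    refine mul_nonpos_of_nonneg_of_nonpos (le_of_lt hγ.2) (Finset.sum_nonpos fun δ hδ => ?_)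
    rw [real_inner_smul_right]
    rw [Finset.mem_filter] at hδ
    have hne : γ ≠ δ := fun h => absurd (h ▸ hδ.2) (not_lt.mpr (le_of_lt hγ.2))
    exact mul_nonpos_of_nonneg_of_nonpos (by linarith [hδ.2])
      (simples_inner_nonpos R hγ.1 hδ.1 hne)
  have hv0 : v = 0 := inner_self_eq_zero.mp (le_antisymm hvv real_inner_self_nonneg)
  have hPpe : Pp = ∅ := by
    by_contra hne
    have hpol : R.pol v = ∑ γ ∈ Pp, c γ * R.pol γ := by
      rw [hv, map_sum]
      exact Finset.sum_congr rfl fun γ _ => by rw [map_smul, smul_eq_mul]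
    have : 0 < R.pol v := by
      rw [hpol]
      refine Finset.sum_pos (fun γ hγ => ?_) (Finset.nonempty_of_ne_empty hne)
      rw [Finset.mem_filter] at hγ
      exact mul_pos hγ.2 (pol_pos_of_mem R (simples_subset_pos R hγ.1))
    rw [hv0, map_zero] at this
    exact lt_irrefl _ this
  have hPne : Pn = ∅ := by
    by_contra hne
    have hpol : R.pol v = ∑ γ ∈ Pn, (-(c γ)) * R.pol γ := by
      rw [hsplit, map_sum]
      exact Finset.sum_congr rfl fun γ _ => by rw [map_smul, smul_eq_mul]
    have : 0 < R.pol v := by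
      rw [hpol]
      refine Finset.sum_pos (fun γ hγ => ?_) (Finset.nonempty_of_ne_empty hne)
      rw [Finset.mem_filter] at hγ
      exact mul_pos (by linarith [hγ.2]) (pol_pos_of_mem R (simples_subset_pos R hγ.1))
    rw [hv0, map_zero] at this
    exact lt_irrefl _ this
  intro γ hγ
  by_contra hc
  rcases lt_or_gt_of_ne hc with hlt | hgt
  · have : γ ∈ Pn := Finset.mem_filter.mpr ⟨hγ, hlt⟩
    rw [hPne] at this; exact absurd this (Finset.notMem_empty γ)
  · have : γ ∈ Pp := Finset.mem_filter.mpr ⟨hγ, hgt⟩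
    rw [hPpe] at this; exact absurd this (Finset.notMem_empty γ)

/-CHUNK4-/
lemma refl_simple_pos {α β : V} (hα : α ∈ R.simples) (hβ : β ∈ R.pos) (hne : β ≠ α) :
    refl α β ∈ R.pos := by
  have hαΔ := pos_subset R (simples_subset_pos R hα)
  have hβΔ := pos_subset R hβ
  have hmem : refl α β ∈ R.Δ := refl_root_mem R hαΔ hβΔ
  rcases pos_or_neg_pos R hmem with h | h
  · exact h
  exfalso
  obtain ⟨b, hb, hbsum⟩ := pos_isNN R β hβ
  obtain ⟨d, hd, hdsum⟩ := pos_isNN R _ h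
  have h1 : ∑ γ ∈ R.simples, (if γ = α then 2 * ⟪α, β⟫ / ⟪α, α⟫ else 0) • γ
      = (2 * ⟪α, β⟫ / ⟪α, α⟫) • α := by
    rw [Finset.sum_congr rfl (fun γ _ => by rw [ite_smul, zero_smul]),
      Finset.sum_ite_eq' R.simples α (fun γ => (2 * ⟪α, β⟫ / ⟪α, α⟫) • γ), if_pos hα]
  have heq : ∑ γ ∈ R.simples,
      (b γ + d γ - (if γ = α then 2 * ⟪α, β⟫ / ⟪α, α⟫ else 0)) • γ = 0 := by
    have hsum : ∑ γ ∈ R.simples,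
        (b γ + d γ - (if γ = α then 2 * ⟪α, β⟫ / ⟪α, α⟫ else 0)) • γ
        = ((∑ γ ∈ R.simples, b γ • γ) + ∑ γ ∈ R.simples, d γ • γ)
          - ∑ γ ∈ R.simples, (if γ = α then 2 * ⟪α, β⟫ / ⟪α, α⟫ else 0) • γ := by
      rw [← Finset.sum_add_distrib, ← Finset.sum_sub_distrib]
      exact Finset.sum_congr rfl fun γ _ => by rw [sub_smul, add_smul]
    rw [hsum, h1, ← hbsum, ← hdsum, refl_apply]
    abel
  have hz := simples_sum_eq_zero R heq
  have hcoef : ∀ γ ∈ R.simples, γ ≠ α → b γ = 0 := by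
    intro γ hγ hne'
    have h2 := hz γ hγ
    rw [if_neg hne'] at h2
    have := hb γ; have := hd γ; linarith
  have hβα : β = b α • α := by
    rw [hbsum, Finset.sum_eq_single α (fun γ hγ hne' => by rw [hcoef γ hγ hne', zero_smul])
      (fun hna => absurd hα hna)]
  rcases R.reduced α hαΔ (b α) (hβα ▸ hβΔ) with h1 | h1
  · exact hne (by rw [hβα, h1, one_smul])
  · have := hb α
    rw [h1] at this
    linarith

lemma refl_simple_pos_ne {α β : V} (hα : α ∈ R.simples) (hβ : β ∈ R.pos) (hne : β ≠ α) :
    refl α β ≠ α := by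
  intro h
  have hαΔ := pos_subset R (simples_subset_pos R hα)
  have h2 : β = -α := by
    rw [← refl_refl α β, h, refl_self α (root_ne_zero R hαΔ)]
  rw [h2] at hβ
  exact not_neg_mem_pos R (simples_subset_pos R hα) hβ

lemma refl_simple_rho {α : V} (hα : α ∈ R.simples) : refl α R.rho = R.rho - α := by
  have hαp := simples_subset_pos R hα
  have hα0 : α ≠ 0 := root_ne_zero R (pos_subset R hαp)
  have hsum : refl α (∑ β ∈ R.pos, β) = (∑ β ∈ R.pos, β) - (2:ℝ) • α := by
    rw [map_sum]
    have hposα : R.pos = insert α (R.pos.erase α) := (Finset.insert_erase hαp).symm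
    rw [hposα, Finset.sum_insert (Finset.notMem_erase α R.pos),
        Finset.sum_insert (Finset.notMem_erase α R.pos)]
    have hbij : ∑ β ∈ R.pos.erase α, refl α β = ∑ β ∈ R.pos.erase α, β := by
      apply Finset.sum_nbij' (i := fun β => refl α β) (j := fun β => refl α β)
      · intro β hβ
        rw [Finset.mem_erase] at hβ ⊢
        exact ⟨refl_simple_pos_ne R hα hβ.2 hβ.1, refl_simple_pos R hα hβ.2 hβ.1⟩
      · intro β hβ
        rw [Finset.mem_erase] at hβ ⊢
        exact ⟨refl_simple_pos_ne R hα hβ.2 hβ.1, refl_simple_pos R hα hβ.2 hβ.1⟩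
      · intro β _; exact refl_refl α β
      · intro β _; exact refl_refl α β
      · intro β _; rfl
    rw [hbij, refl_self α hα0]
    rw [two_smul]; abel
  rw [RootSystemData.rho, map_smul, hsum, smul_sub, smul_smul]
  norm_num

lemma rho_inner_simple {α : V} (hα : α ∈ R.simples) : 0 < ⟪R.rho, α⟫ := by
  have hαΔ := pos_subset R (simples_subset_pos R hα)
  have hα0 : α ≠ 0 := root_ne_zero R hαΔ
  have h := refl_simple_rho R hα
  rw [refl_apply] at h
  have h2 : (2 * ⟪α, R.rho⟫ / ⟪α, α⟫) • α = (1:ℝ) • α := by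
    rw [one_smul]; rwa [sub_right_inj] at h
  have h3 : 2 * ⟪α, R.rho⟫ / ⟪α, α⟫ = 1 := smul_left_injective ℝ hα0 h2
  have hA := root_inner_pos R hαΔ
  rw [real_inner_comm]
  have : 2 * ⟪α, R.rho⟫ = ⟪α, α⟫ := by
    field_simp at h3
    linarith [h3]
  linarith

lemma rho_inner_pos {β : V} (hβ : β ∈ R.pos) : 0 < ⟪R.rho, β⟫ := by
  obtain ⟨c, hc, hcsum⟩ := pos_isNN R β hβ
  have hβ0 : β ≠ 0 := root_ne_zero R (pos_subset R hβ)
  have hex : ∃ γ ∈ R.simples, 0 < c γ := by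
    by_contra h
    push_neg at h
    apply hβ0
    rw [hcsum]
    refine Finset.sum_eq_zero fun γ hγ => ?_
    rw [le_antisymm (h γ hγ) (hc γ), zero_smul]
  obtain ⟨γ₀, hγ₀, hcγ₀⟩ := hex
  rw [hcsum, inner_sum]
  refine Finset.sum_pos' (fun γ hγ => ?_) ⟨γ₀, hγ₀, ?_⟩
  · rw [real_inner_smul_right]
    exact mul_nonneg (hc γ) (le_of_lt (rho_inner_simple R hγ))
  · rw [real_inner_smul_right]
    exact mul_pos hcγ₀ (rho_inner_simple R hγ₀)

/-CHUNK5-/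
/-- product of reflections along a list of roots -/
def wprod (l : List V) : V ≃ₗ[ℝ] V := (l.map refl).prod

lemma wprod_nil : wprod ([] : List V) = 1 := rfl

lemma wprod_cons (α : V) (l : List V) : wprod (α :: l) = refl α * wprod l := by
  simp [wprod]

lemma wprod_append (l m : List V) : wprod (l ++ m) = wprod l * wprod m := by
  simp [wprod]

lemma refl_mul_self (α : V) : refl α * refl α = 1 := by
  nth_rewrite 2 [← refl_inv α]
  exact mul_inv_cancel _

lemma wprod_reverse (l : List V) : wprod l.reverse = (wprod l)⁻¹ := by
  induction l with
  | nil => simp [wprod]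
  | cons α l ih =>
    rw [List.reverse_cons, wprod_append]
    conv_rhs => rw [wprod_cons]
    rw [mul_inv_rev, refl_inv, ih]
    congr 1
    all_goals simp [wprod]

lemma wprod_mem_Ogrp {l : List V} (h : ∀ α ∈ l, α ∈ R.Δ) : wprod l ∈ Ogrp R := by
  apply Subgroup.list_prod_mem
  intro x hx
  rw [List.mem_map] at hx
  obtain ⟨α, hα, rfl⟩ := hx
  exact refl_mem_Ogrp R (h α hα)

lemma wprod_mem_closure {S : Finset V} {l : List V} (h : ∀ α ∈ l, α ∈ S) :
    wprod l ∈ Subgroup.closure {g : V ≃ₗ[ℝ] V | RootSystemData.IsReflectionIn S g} := by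
  apply Subgroup.list_prod_mem
  intro x hx
  rw [List.mem_map] at hx
  obtain ⟨α, hα, rfl⟩ := hx
  exact Subgroup.subset_closure (isReflectionIn_iff.mpr ⟨α, h α hα, rfl⟩)

lemma exchange : ∀ (m : List V), (∀ β ∈ m, β ∈ R.simples) → ∀ α ∈ R.simples,
    -(wprod m α) ∈ R.pos →
    ∃ m' : List V, (∀ β ∈ m', β ∈ R.simples) ∧ m'.length + 1 = m.length ∧
      wprod m * refl α = wprod m' := by
  intro m
  induction m with
  | nil =>
    intro _ α hα h
    exfalso
    rw [wprod_nil] at h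
    exact not_neg_mem_pos R (simples_subset_pos R hα) h
  | cons β t ih =>
    intro hm α hα hneg
    have hβs : β ∈ R.simples := hm β List.mem_cons_self
    have ht : ∀ γ ∈ t, γ ∈ R.simples := fun γ hγ => hm γ (List.mem_cons_of_mem β hγ)
    by_cases hc : -(wprod t α) ∈ R.pos
    · obtain ⟨m'', hm'', hlen, heq⟩ := ih ht α hα hc
      refine ⟨β :: m'', fun γ hγ => ?_, by simp [← hlen, List.length_cons], ?_⟩
      · rcases List.mem_cons.mp hγ with rfl | hγ
        · exact hβs
        · exact hm'' γ hγ
      · rw [wprod_cons, wprod_cons, mul_assoc, heq]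
    · have hαp : α ∈ R.pos := simples_subset_pos R hα
      have hw' : wprod t ∈ Ogrp R :=
        wprod_mem_Ogrp R fun γ hγ => pos_subset R (simples_subset_pos R (ht γ hγ))
      have hΔ : wprod t α ∈ R.Δ := hw'.2 α (pos_subset R hαp)
      have hp : wprod t α ∈ R.pos := (pos_or_neg_pos R hΔ).resolve_right hc
      have hnotpos : refl β (wprod t α) ∉ R.pos := by
        intro hq
        rw [wprod_cons, mul_apply] at hneg
        exact not_neg_mem_pos R hq hneg
      have heqβ : wprod t α = β := by
        by_contra hne
        exact hnotpos (refl_simple_pos R hβs hp hne)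
      have hconj : refl β = wprod t * refl α * (wprod t)⁻¹ := by
        rw [conj_refl (wprod t) hw'.1 α, heqβ]
      refine ⟨t, ht, by simp, ?_⟩
      rw [wprod_cons, hconj]
      calc wprod t * refl α * (wprod t)⁻¹ * wprod t * refl α
          = wprod t * (refl α * refl α) := by group
        _ = wprod t := by rw [refl_mul_self, mul_one]

lemma eq_one_of_preserves_pos :
    ∀ (n : ℕ) (l : List V), l.length ≤ n → (∀ β ∈ l, β ∈ R.simples) →
    (∀ β ∈ R.pos, wprod l β ∈ R.pos) → wprod l = 1 := by
  intro n
  induction n with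
  | zero =>
    intro l hlen _ _
    rw [List.length_eq_zero_iff.mp (Nat.le_zero.mp hlen)]
    rfl
  | succ n ih =>
    intro l hlen hl hpos
    rcases List.eq_nil_or_concat l with rfl | ⟨m, α, rfl⟩
    · rfl
    · simp only [List.concat_eq_append] at hl hlen hpos ⊢
      have hα : α ∈ R.simples := hl α (by simp)
      have hm : ∀ β ∈ m, β ∈ R.simples := fun β hβ => hl β (by simp [hβ])
      have hα0 : α ≠ 0 := root_ne_zero R (pos_subset R (simples_subset_pos R hα))
      have hw : wprod (m ++ [α]) = wprod m * refl α := by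
        rw [wprod_append]
        congr 1
        all_goals simp [wprod]
      have h1 : wprod (m ++ [α]) α ∈ R.pos := hpos α (simples_subset_pos R hα)
      have h2 : wprod (m ++ [α]) α = -(wprod m α) := by
        rw [hw, mul_apply, refl_self α hα0, map_neg]
      have h3 : -(wprod m α) ∈ R.pos := h2 ▸ h1
      obtain ⟨m', hm', hlen', heq⟩ := exchange R m hm α hα h3
      have hwl : wprod (m ++ [α]) = wprod m' := by rw [hw, heq]
      rw [hwl]
      apply ih m' ?_ hm'
      · intro β hβ
        rw [← hwl]
        exact hpos β hβ
      have : (m ++ [α]).length ≤ n + 1 := hlen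
      rw [List.length_append, List.length_singleton] at this
      omega

lemma simple_conj : ∀ β ∈ R.pos, ∃ l : List V, (∀ γ ∈ l, γ ∈ R.simples) ∧
    ∃ α ∈ R.simples, wprod l α = β := by
  apply pol_induction
  intro β hβ ih
  by_cases hs : β ∈ R.simples
  · exact ⟨[], fun _ h => absurd h List.not_mem_nil, β, hs, rfl⟩
  · obtain ⟨c, hc, hcsum⟩ := pos_isNN R β hβ
    have hββ : 0 < ⟪β, β⟫ := root_inner_pos R (pos_subset R hβ)
    have hex : ∃ α ∈ R.simples, 0 < ⟪α, β⟫ := by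
      by_contra h
      push_neg at h
      have hle : ⟪β, β⟫ ≤ 0 := by
        nth_rewrite 1 [hcsum]
        rw [sum_inner]
        refine Finset.sum_nonpos fun γ hγ => ?_
        rw [real_inner_smul_left]
        exact mul_nonpos_of_nonneg_of_nonpos (hc γ) (h γ hγ)
      linarith
    obtain ⟨α, hαs, hαβ⟩ := hex
    have hαΔ : α ∈ R.Δ := pos_subset R (simples_subset_pos R hαs)
    have hne : β ≠ α := fun h => hs (h ▸ hαs)
    have hβ' : refl α β ∈ R.pos := refl_simple_pos R hαs hβ hne
    have hpol : R.pol (refl α β) < R.pol β := by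
      rw [refl_apply, map_sub, map_smul]
      have hA := root_inner_pos R hαΔ
      have hk : 0 < 2 * ⟪α, β⟫ / ⟪α, α⟫ := by positivity
      have hpα := pol_pos_of_mem R (simples_subset_pos R hαs)
      have : 0 < (2 * ⟪α, β⟫ / ⟪α, α⟫) • R.pol α := by
        rw [smul_eq_mul]; exact mul_pos hk hpα
      linarith
    obtain ⟨l, hl, α', hα', heq⟩ := ih _ hβ' hpol
    refine ⟨α :: l, fun γ hγ => ?_, α', hα', ?_⟩
    · rcases List.mem_cons.mp hγ with rfl | hγ
      · exact hαs
      · exact hl γ hγ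
    · rw [wprod_cons, mul_apply, heq, refl_refl]

/-- the subgroup generated by simple reflections -/
def sclosure (R : RootSystemData V) : Subgroup (V ≃ₗ[ℝ] V) :=
  Subgroup.closure {g : V ≃ₗ[ℝ] V | RootSystemData.IsReflectionIn R.simples g}

lemma refl_pos_mem_sclosure {β : V} (hβ : β ∈ R.pos) : refl β ∈ sclosure R := by
  obtain ⟨l, hl, α, hα, heq⟩ := simple_conj R β hβ
  have hw : wprod l ∈ Ogrp R :=
    wprod_mem_Ogrp R fun γ hγ => pos_subset R (simples_subset_pos R (hl γ hγ))
  have hconj : refl β = wprod l * refl α * (wprod l)⁻¹ := by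
    rw [conj_refl (wprod l) hw.1 α, heq]
  rw [hconj]
  have hwmem : wprod l ∈ sclosure R := wprod_mem_closure hl
  exact mul_mem (mul_mem hwmem
    (Subgroup.subset_closure (isReflectionIn_iff.mpr ⟨α, hα, rfl⟩))) (inv_mem hwmem)

lemma refl_root_mem_sclosure {β : V} (hβ : β ∈ R.Δ) : refl β ∈ sclosure R := by
  rcases pos_or_neg_pos R hβ with h | h
  · exact refl_pos_mem_sclosure R h
  · have := refl_pos_mem_sclosure R h
    rwa [refl_neg] at this

lemma weyl_le_sclosure : R.weyl ≤ sclosure R := by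
  apply Subgroup.closure_le _ |>.mpr
  rintro g hg
  obtain ⟨β, hβ, rfl⟩ := isReflectionIn_iff.mp hg
  exact refl_root_mem_sclosure R hβ

lemma exists_word {w : V ≃ₗ[ℝ] V} (hw : w ∈ sclosure R) :
    ∃ l : List V, (∀ γ ∈ l, γ ∈ R.simples) ∧ wprod l = w := by
  induction hw using Subgroup.closure_induction with
  | mem g hg =>
    obtain ⟨α, hα, rfl⟩ := isReflectionIn_iff.mp hg
    exact ⟨[α], fun γ hγ => by rwa [List.mem_singleton.mp hγ], by simp [wprod]⟩
  | one => exact ⟨[], fun _ h => absurd h List.not_mem_nil, rfl⟩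
  | mul x y _ _ ihx ihy =>
    obtain ⟨l, hl, rfl⟩ := ihx
    obtain ⟨m, hm, rfl⟩ := ihy
    exact ⟨l ++ m, fun γ hγ => by
      rcases List.mem_append.mp hγ with h | h
      exacts [hl γ h, hm γ h], (wprod_append l m)⟩
  | inv x _ ihx =>
    obtain ⟨l, hl, rfl⟩ := ihx
    exact ⟨l.reverse, fun γ hγ => hl γ (List.mem_reverse.mp hγ), wprod_reverse l⟩

theorem eq_one_of_fixes_rho {w : V ≃ₗ[ℝ] V} (hw : w ∈ R.weyl) (hrho : w R.rho = R.rho) :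
    w = 1 := by
  have hwO := weyl_le_Ogrp R hw
  have hpos : ∀ β ∈ R.pos, w β ∈ R.pos := by
    intro β hβ
    have hβΔ := pos_subset R hβ
    have hwβ : w β ∈ R.Δ := hwO.2 β hβΔ
    rcases pos_or_neg_pos R hwβ with h | h
    · exact h
    exfalso
    have h1 : 0 < ⟪R.rho, β⟫ := rho_inner_pos R hβ
    have h2 : ⟪R.rho, w β⟫ = ⟪R.rho, β⟫ := by
      nth_rewrite 1 [← hrho]
      exact hwO.1 R.rho β
    have h3 : 0 < ⟪R.rho, -(w β)⟫ := rho_inner_pos R h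
    rw [inner_neg_right] at h3
    linarith
  obtain ⟨l, hl, hprod⟩ := exists_word R (weyl_le_sclosure R hw)
  rw [← hprod]
  exact eq_one_of_preserves_pos R l.length l le_rfl hl
    (fun β hβ => by rw [hprod]; exact hpos β hβ)

/-CHUNK6-/
lemma Ogrp_norm {g : V ≃ₗ[ℝ] V} (hg : g ∈ Ogrp R) (x : V) : ‖g x‖ = ‖x‖ := by
  have h := hg.1 x x
  rw [real_inner_self_eq_norm_sq, real_inner_self_eq_norm_sq] at h
  have := sq_eq_sq_iff_abs_eq_abs (‖g x‖) (‖x‖) |>.mp h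
  simpa using this

lemma long_subset : R.long ⊆ R.Δ := Finset.filter_subset _ _

lemma short_subset : R.short ⊆ R.Δ := Finset.filter_subset _ _

lemma long_mem_iff {α : V} : α ∈ R.long ↔ α ∈ R.Δ ∧ ∃ β ∈ R.Δ, ‖β‖ < ‖α‖ :=
  Finset.mem_filter

lemma short_or_long {α : V} (hα : α ∈ R.Δ) : α ∈ R.short ∨ α ∈ R.long := by
  by_cases h : ∀ β ∈ R.Δ, ‖α‖ ≤ ‖β‖
  · exact Or.inl (Finset.mem_filter.mpr ⟨hα, h⟩)
  · push_neg at h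
    obtain ⟨β, hβ, hlt⟩ := h
    exact Or.inr ((long_mem_iff R).mpr ⟨hα, β, hβ, hlt⟩)

lemma not_short_and_long {α : V} (hs : α ∈ R.short) (hl : α ∈ R.long) : False := by
  obtain ⟨_, β, hβ, hlt⟩ := (long_mem_iff R).mp hl
  exact absurd ((Finset.mem_filter.mp hs).2 β hβ) (not_le.mpr hlt)

lemma Ogrp_long_mem {g : V ≃ₗ[ℝ] V} (hg : g ∈ Ogrp R) {β : V} (hβ : β ∈ R.long) :
    g β ∈ R.long := by
  obtain ⟨hβΔ, γ, hγ, hlt⟩ := (long_mem_iff R).mp hβ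
  exact (long_mem_iff R).mpr ⟨hg.2 β hβΔ, γ, hγ, by rwa [Ogrp_norm R hg]⟩

lemma conj_mem_weylL {x w : V ≃ₗ[ℝ] V} (hx : x ∈ R.weyl) (hw : w ∈ R.weylL) :
    x * w * x⁻¹ ∈ R.weylL := by
  have hxO := weyl_le_Ogrp R hx
  induction hw using Subgroup.closure_induction with
  | mem g hg =>
    obtain ⟨β, hβ, rfl⟩ := isReflectionIn_iff.mp hg
    rw [conj_refl x hxO.1 β]
    exact Subgroup.subset_closure
      (isReflectionIn_iff.mpr ⟨x β, Ogrp_long_mem R hxO hβ, rfl⟩)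
  | one =>
    have : x * 1 * x⁻¹ = 1 := by group
    rw [this]; exact one_mem _
  | mul a b _ _ iha ihb =>
    have : x * (a * b) * x⁻¹ = (x * a * x⁻¹) * (x * b * x⁻¹) := by group
    rw [this]; exact mul_mem iha ihb
  | inv a _ iha =>
    have : x * a⁻¹ * x⁻¹ = (x * a * x⁻¹)⁻¹ := by group
    rw [this]; exact inv_mem iha

lemma weylS_le_weyl : R.weylS ≤ R.weyl := by
  apply Subgroup.closure_mono
  rintro g ⟨α, hα, h⟩
  exact ⟨α, pos_subset R (simples_subset_pos R (Finset.mem_of_mem_inter_left hα)), h⟩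

lemma weylL_le_weyl : R.weylL ≤ R.weyl := by
  apply Subgroup.closure_mono
  rintro g ⟨α, hα, h⟩
  exact ⟨α, long_subset R hα, h⟩

lemma sup_eq_weyl : R.weylS ⊔ R.weylL = R.weyl := by
  apply le_antisymm (sup_le (weylS_le_weyl R) (weylL_le_weyl R))
  have hscl : sclosure R ≤ R.weylS ⊔ R.weylL := by
    apply Subgroup.closure_le _ |>.mpr
    rintro g hg
    obtain ⟨α, hα, rfl⟩ := isReflectionIn_iff.mp hg
    rcases short_or_long R (pos_subset R (simples_subset_pos R hα)) with h | h
    · exact le_sup_left (α := Subgroup (V ≃ₗ[ℝ] V)) (a := R.weylS) (b := R.weylL)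
        (Subgroup.subset_closure
          (isReflectionIn_iff.mpr ⟨α, Finset.mem_inter.mpr ⟨hα, h⟩, rfl⟩))
    · exact le_sup_right (α := Subgroup (V ≃ₗ[ℝ] V)) (a := R.weylS) (b := R.weylL)
        (Subgroup.subset_closure (isReflectionIn_iff.mpr ⟨α, h, rfl⟩))
  exact le_trans (weyl_le_sclosure R) hscl

lemma posL_eq : R.posL = R.pos ∩ R.long := rfl

lemma refl_shortSimple_fixes_rhoL {α : V} (hα : α ∈ R.simplesS) :
    refl α R.rhoL = R.rhoL := by
  have hαs : α ∈ R.simples := Finset.mem_of_mem_inter_left hα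
  have hαshort : α ∈ R.short := Finset.mem_of_mem_inter_right hα
  have hαΔ : α ∈ R.Δ := pos_subset R (simples_subset_pos R hαs)
  have hmaps : ∀ β ∈ R.posL, refl α β ∈ R.posL := by
    intro β hβ
    rw [posL_eq, Finset.mem_inter] at hβ ⊢
    have hne : β ≠ α := by
      rintro rfl
      exact not_short_and_long R hαshort hβ.2
    exact ⟨refl_simple_pos R hαs hβ.1 hne,
      Ogrp_long_mem R (refl_mem_Ogrp R hαΔ) hβ.2⟩
  have hsum : refl α (∑ β ∈ R.posL, β) = ∑ β ∈ R.posL, β := by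
    rw [map_sum]
    apply Finset.sum_nbij' (i := fun β => refl α β) (j := fun β => refl α β)
    · exact hmaps
    · exact hmaps
    · intro β _; exact refl_refl α β
    · intro β _; exact refl_refl α β
    · intro β _; rfl
  rw [RootSystemData.rhoL, map_smul, hsum]

/-- The long roots form a root system. -/
def longSub (R : RootSystemData V) : RootSystemData V where
  Δ := R.long
  pol := R.pol
  nonzero := fun h => R.nonzero (long_subset R h)
  neg_mem := by
    intro α hα
    obtain ⟨hαΔ, γ, hγ, hlt⟩ := (long_mem_iff R).mp hα
    exact (long_mem_iff R).mpr ⟨R.neg_mem α hαΔ, γ, hγ, by rwa [norm_neg]⟩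
  reduced := fun α hα t ht =>
    R.reduced α (long_subset R hα) t (long_subset R ht)
  crys := fun α hα β hβ => R.crys α (long_subset R hα) β (long_subset R hβ)
  reflect_mem := by
    intro α hα β hβ
    have h1 : refl α β ∈ R.Δ := refl_root_mem R (long_subset R hα) (long_subset R hβ)
    have h2 : refl α β ∈ R.long := Ogrp_long_mem R (refl_mem_Ogrp R (long_subset R hα)) hβ
    rw [refl_apply] at h2
    exact h2
  pol_ne := fun α hα => R.pol_ne α (long_subset R hα)

lemma longSub_pos : (longSub R).pos = R.posL := by
  ext β
  rw [RootSystemData.pos, posL_eq, Finset.mem_inter, RootSystemData.pos,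
    Finset.mem_filter, Finset.mem_filter]
  show β ∈ R.long ∧ 0 < R.pol β ↔ (β ∈ R.Δ ∧ 0 < R.pol β) ∧ β ∈ R.long
  constructor
  · rintro ⟨h1, h2⟩; exact ⟨⟨long_subset R h1, h2⟩, h1⟩
  · rintro ⟨⟨_, h2⟩, h1⟩; exact ⟨h1, h2⟩

lemma longSub_rho : (longSub R).rho = R.rhoL := by
  rw [RootSystemData.rho, RootSystemData.rhoL, longSub_pos]

lemma longSub_weyl : (longSub R).weyl = R.weylL := rfl

lemma inter_eq_one {w : V ≃ₗ[ℝ] V} (hwS : w ∈ R.weylS) (hwL : w ∈ R.weylL) : w = 1 := by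
  have hfix : w R.rhoL = R.rhoL := by
    clear hwL
    induction hwS using Subgroup.closure_induction with
    | mem g hg =>
      obtain ⟨α, hα, rfl⟩ := isReflectionIn_iff.mp hg
      exact refl_shortSimple_fixes_rhoL R hα
    | one => rfl
    | mul a b _ _ iha ihb =>
      rw [mul_apply, ihb, iha]
    | inv a _ iha =>
      conv_lhs => rw [← iha]
      rw [inv_apply, a.symm_apply_apply]
  have : w ∈ (longSub R).weyl := by rw [longSub_weyl]; exact hwL
  apply eq_one_of_fixes_rho (longSub R) this
  rw [longSub_rho]
  exact hfix

end RSD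

/-- For an irreducible root system with two root lengths, `W_l` is a
normal subgroup of `W`, and `W` is the (internal) semidirect product `W(Π_s) ⋉ W_l`:
inside `W`, the subgroup `W_l` is normal, `W(Π_s) ∩ W_l = 1` and `W(Π_s) · W_l = W`. -/
theorem statement3 {V : Type} [NormedAddCommGroup V] [InnerProductSpace ℝ V]
    [FiniteDimensional ℝ V] (R : RootSystemData V)
    (hirr : R.IsIrreducible) (h2 : R.TwoLengths) (hsp : R.Spans) :
    (R.weylL.subgroupOf R.weyl).Normal ∧
      R.weylS.subgroupOf R.weyl ⊓ R.weylL.subgroupOf R.weyl = ⊥ ∧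
      R.weylS.subgroupOf R.weyl ⊔ R.weylL.subgroupOf R.weyl = ⊤ := by
  refine ⟨?_, ?_, ?_⟩
  · constructor
    intro n hn g
    rw [Subgroup.mem_subgroupOf] at hn ⊢
    have hcoe : ((g * n * g⁻¹ : R.weyl) : V ≃ₗ[ℝ] V)
        = (g : V ≃ₗ[ℝ] V) * (n : V ≃ₗ[ℝ] V) * (g : V ≃ₗ[ℝ] V)⁻¹ := rfl
    rw [hcoe]
    exact RSD.conj_mem_weylL R g.2 hn
  · rw [eq_bot_iff]
    intro x hx
    rw [Subgroup.mem_inf, Subgroup.mem_subgroupOf, Subgroup.mem_subgroupOf] at hx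
    rw [Subgroup.mem_bot]
    exact Subtype.ext (RSD.inter_eq_one R hx.1 hx.2)
  · rw [← Subgroup.subgroupOf_sup (RSD.weylS_le_weyl R)
      (RSD.weylL_le_weyl R), RSD.sup_eq_weyl]
    exact Subgroup.subgroupOf_self _
end
end

section
/- Let Δ be a reduced irreducible root system with two root lengths and fixed positive system Δ⁺. The subgroup W(Π_s) of the Weyl group generated by short simple reflections equals {w ∈ W : w(Δ⁺_l) ⊂ Δ⁺_l}, i.e. exactly those Weyl group elements mapping every long positive root to a long positive root. -/
noncomputable section
open Finset
open scoped RealInnerProductSpace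

attribute [local instance] Classical.propDecidable

variable (V : Type) [NormedAddCommGroup V] [InnerProductSpace ℝ V]

variable {V}

namespace RootSystemData

section Aux

/-- The reflection in `α`, as a linear map. -/
def srefLM (α : V) : V →ₗ[ℝ] V where
  toFun x := x - (2 * ⟪α, x⟫ / ⟪α, α⟫) • α
  map_add' x y := by
    rw [inner_add_right, show 2 * (⟪α, x⟫ + ⟪α, y⟫) / ⟪α, α⟫
        = 2 * ⟪α, x⟫ / ⟪α, α⟫ + 2 * ⟪α, y⟫ / ⟪α, α⟫ by ring, add_smul]
    abel
  map_smul' c x := by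
    rw [RingHom.id_apply, real_inner_smul_right, smul_sub, smul_smul,
      show c * (2 * ⟪α, x⟫ / ⟪α, α⟫) = 2 * (c * ⟪α, x⟫) / ⟪α, α⟫ by ring]

lemma srefLM_apply (α x : V) : srefLM α x = x - (2 * ⟪α, x⟫ / ⟪α, α⟫) • α := rfl

lemma srefLM_srefLM (α x : V) : srefLM α (srefLM α x) = x := by
  by_cases hα : α = (0 : V)
  · simp [srefLM_apply, hα]
  · have hA : ⟪α, α⟫ ≠ 0 := inner_self_ne_zero.mpr hα
    have h1 : ⟪α, srefLM α x⟫ = -⟪α, x⟫ := by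
      rw [srefLM_apply, inner_sub_right, real_inner_smul_right]
      field_simp
      ring
    rw [srefLM_apply α (srefLM α x), h1, srefLM_apply,
      show 2 * -⟪α, x⟫ / ⟪α, α⟫ = -(2 * ⟪α, x⟫ / ⟪α, α⟫) by ring, neg_smul]
    abel

/-- The reflection in `α`, as a linear equivalence. -/
def sref (α : V) : V ≃ₗ[ℝ] V :=
  LinearEquiv.ofLinear (srefLM α) (srefLM α)
    (LinearMap.ext fun x => srefLM_srefLM α x) (LinearMap.ext fun x => srefLM_srefLM α x)

lemma sref_apply (α x : V) : sref α x = x - (2 * ⟪α, x⟫ / ⟪α, α⟫) • α := rfl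

lemma sref_sref (α x : V) : sref α (sref α x) = x := srefLM_srefLM α x

lemma sref_mul_self (α : V) : sref α * sref α = 1 :=
  LinearEquiv.ext fun x => sref_sref α x

lemma sref_inv (α : V) : (sref α)⁻¹ = sref α :=
  inv_eq_of_mul_eq_one_right (sref_mul_self α)

lemma sref_self (α : V) (h : α ≠ 0) : sref α α = -α := by
  have hA : ⟪α, α⟫ ≠ 0 := inner_self_ne_zero.mpr h
  rw [sref_apply, show (2 * ⟪α, α⟫ / ⟪α, α⟫ : ℝ) = 2 by field_simp, two_smul]
  abel

lemma sref_neg (α : V) : sref (-α) = sref α := by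
  refine LinearEquiv.ext fun x => ?_
  rw [sref_apply, sref_apply, inner_neg_left, inner_neg_neg, smul_neg,
    show 2 * -⟪α, x⟫ / ⟪α, α⟫ = -(2 * ⟪α, x⟫ / ⟪α, α⟫) by ring, neg_smul, neg_neg]

lemma inner_sref (α x y : V) : ⟪sref α x, sref α y⟫ = ⟪x, y⟫ := by
  by_cases hα : α = (0 : V)
  · simp [sref_apply, hα]
  · have hA : ⟪α, α⟫ ≠ 0 := inner_self_ne_zero.mpr hα
    rw [sref_apply, sref_apply, inner_sub_left, inner_sub_right, inner_sub_right,
      real_inner_smul_left, real_inner_smul_left, real_inner_smul_right,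
      real_inner_smul_right, real_inner_comm x α]
    field_simp
    ring

lemma norm_sref (α x : V) : ‖sref α x‖ = ‖x‖ := by
  have h := inner_sref α x x
  rw [real_inner_self_eq_norm_mul_norm, real_inner_self_eq_norm_mul_norm] at h
  exact (mul_self_inj (norm_nonneg _) (norm_nonneg _)).mp h

lemma sref_conj (u : V ≃ₗ[ℝ] V) (hu : ∀ x y : V, ⟪u x, u y⟫ = ⟪x, y⟫) (β : V) :
    sref (u β) = u * sref β * u⁻¹ := by
  refine LinearEquiv.ext fun y => ?_
  show sref (u β) y = u (sref β (u.symm y))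
  have h2 : ⟪β, u.symm y⟫ = ⟪u β, y⟫ := by
    conv_rhs => rw [show y = u (u.symm y) from (u.apply_symm_apply y).symm]
    rw [hu]
  rw [sref_apply, sref_apply, map_sub, map_smul, u.apply_symm_apply, h2, hu β β]

end Aux

variable (R : RootSystemData V)

lemma pos_subset : R.pos ⊆ R.Δ := Finset.filter_subset _ _

lemma pol_pos {β : V} (h : β ∈ R.pos) : 0 < R.pol β := (Finset.mem_filter.1 h).2

lemma ne_zero_of_mem {β : V} (h : β ∈ R.Δ) : β ≠ 0 := fun h0 => R.nonzero (h0 ▸ h)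

lemma inner_self_pos' {β : V} (h : β ∈ R.Δ) : 0 < ⟪β, β⟫ :=
  lt_of_le_of_ne real_inner_self_nonneg
    (Ne.symm (inner_self_ne_zero.mpr (R.ne_zero_of_mem h)))

lemma pos_or_neg {β : V} (h : β ∈ R.Δ) : β ∈ R.pos ∨ -β ∈ R.pos := by
  rcases (R.pol_ne β h).lt_or_gt with h1 | h1
  · right
    exact Finset.mem_filter.2 ⟨R.neg_mem β h, by simpa using h1.le.lt_of_ne (by simpa using (R.pol_ne β h))⟩
  · left
    exact Finset.mem_filter.2 ⟨h, h1⟩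

lemma not_both {β : V} (h : β ∈ R.pos) : -β ∉ R.pos := by
  intro h'
  have h1 := R.pol_pos h
  have h2 := R.pol_pos h'
  rw [map_neg] at h2
  linarith

lemma sref_mem {α β : V} (hα : α ∈ R.Δ) (hβ : β ∈ R.Δ) : sref α β ∈ R.Δ :=
  R.reflect_mem α hα β hβ

lemma simples_subset_pos : R.simples ⊆ R.pos := Finset.filter_subset _ _

lemma not_smul_of_pos {α β : V} (hα : α ∈ R.pos) (hβ : β ∈ R.pos) (hne : β ≠ α) :
    ∀ t : ℝ, β ≠ t • α := by
  intro t h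
  rcases R.reduced α (R.pos_subset hα) t (h ▸ R.pos_subset hβ) with h1 | h1
  · rw [h1, one_smul] at h; exact hne h
  · rw [h1, neg_one_smul] at h
    exact R.not_both hα (h ▸ hβ)

lemma sub_mem {α β : V} (hα : α ∈ R.Δ) (hβ : β ∈ R.Δ) (hip : 0 < ⟪α, β⟫)
    (hnp : ∀ t : ℝ, β ≠ t • α) : β - α ∈ R.Δ := by
  obtain ⟨n, hn⟩ := R.crys α hα β hβ
  obtain ⟨m, hm⟩ := R.crys β hβ α hα
  have hA := R.inner_self_pos' hα
  have hB := R.inner_self_pos' hβ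
  have hα0 := R.ne_zero_of_mem hα
  have hβ0 := R.ne_zero_of_mem hβ
  have hip' : (0:ℝ) < ⟪β, α⟫ := by rwa [real_inner_comm]
  have hn1 : 1 ≤ n := by
    have h0 : (0 : ℝ) < (n : ℝ) := by rw [← hn]; positivity
    have : (0 : ℤ) < n := by exact_mod_cast h0
    omega
  have hm1 : 1 ≤ m := by
    have h0 : (0 : ℝ) < (m : ℝ) := by rw [← hm]; positivity
    have : (0 : ℤ) < m := by exact_mod_cast h0
    omega
  have hna : (0:ℝ) < ‖α‖ := norm_pos_iff.2 hα0
  have hnb : (0:ℝ) < ‖β‖ := norm_pos_iff.2 hβ0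
  have hcs : ⟪α, β⟫ < ‖α‖ * ‖β‖ := by
    refine inner_lt_norm_mul_iff_real.mpr ?_
    intro hcontra
    refine hnp (‖β‖ / ‖α‖) ?_
    rw [div_eq_inv_mul, mul_smul, hcontra, inv_smul_smul₀ hna.ne']
  have h4 : 4 * (⟪α, β⟫ * ⟪α, β⟫) < 4 * (⟪α, α⟫ * ⟪β, β⟫) := by
    rw [real_inner_self_eq_norm_mul_norm, real_inner_self_eq_norm_mul_norm]
    nlinarith [hip, hcs]
  have heq : ((n * m : ℤ) : ℝ) * (⟪α, α⟫ * ⟪β, β⟫) = 4 * (⟪α, β⟫ * ⟪α, β⟫) := by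
    push_cast
    rw [← hn, ← hm, real_inner_comm β α]
    field_simp
    ring
  have hnm : n * m < 4 := by
    have hABpos : (0:ℝ) < ⟪α, α⟫ * ⟪β, β⟫ := mul_pos hA hB
    have hlt : ((n * m : ℤ) : ℝ) < 4 := by nlinarith [heq, h4, hABpos]
    exact_mod_cast hlt
  have hcase : n = 1 ∨ m = 1 := by
    by_contra hc
    push_neg at hc
    have hn2 : 2 ≤ n := by omega
    have hm2 : 2 ≤ m := by omega
    nlinarith [hn2, hm2, hnm]
  rcases hcase with h1 | h1
  · have := R.reflect_mem α hα β hβ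
    rw [hn, h1] at this
    simpa using this
  · have := R.reflect_mem β hβ α hα
    rw [hm, h1] at this
    simp only [Int.cast_one, one_smul] at this
    have := R.neg_mem _ this
    rwa [neg_sub] at this

lemma not_decomp {α : V} (hα : α ∈ R.simples) :
    ¬ ∃ β ∈ R.pos, ∃ γ ∈ R.pos, β + γ = α := (Finset.mem_filter.1 hα).2

/-- Lemma A : stripping a simple root. -/
lemma lemA {α δ : V} (hα : α ∈ R.simples) (hδ : δ ∈ R.pos) (hne : δ ≠ α)
    (hip : 0 < ⟪α, δ⟫) : δ - α ∈ R.pos := by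
  have hαp := R.simples_subset_pos hα
  have hmem : δ - α ∈ R.Δ :=
    R.sub_mem (R.pos_subset hαp) (R.pos_subset hδ) hip (R.not_smul_of_pos hαp hδ hne)
  rcases R.pos_or_neg hmem with h | h
  · exact h
  · exfalso
    rw [neg_sub] at h
    exact R.not_decomp hα ⟨δ, hδ, α - δ, h, by abel⟩

lemma inner_int {α β : V} (hα : α ∈ R.Δ) (hβ : β ∈ R.Δ) :
    ∃ n : ℤ, 2 * ⟪α, β⟫ / ⟪α, α⟫ = (n : ℝ) := R.crys α hα β hβ

/-- The key lemma: a simple reflection permutes the positive roots other than itself. -/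
lemma key {α β : V} (hα : α ∈ R.simples) (hβ : β ∈ R.pos) (hne : β ≠ α) :
    sref α β ∈ R.pos := by
  have hαp := R.simples_subset_pos hα
  have hαΔ := R.pos_subset hαp
  have hβΔ := R.pos_subset hβ
  have hA := R.inner_self_pos' hαΔ
  have hmem : sref α β ∈ R.Δ := R.sref_mem hαΔ hβΔ
  by_cases hip : ⟪α, β⟫ ≤ 0
  · refine Finset.mem_filter.2 ⟨hmem, ?_⟩
    have hc : 2 * ⟪α, β⟫ / ⟪α, α⟫ ≤ 0 := div_nonpos_iff.2 (Or.inr ⟨by linarith, hA.le⟩)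
    have : R.pol (sref α β) = R.pol β - (2 * ⟪α, β⟫ / ⟪α, α⟫) * R.pol α := by
      rw [sref_apply, map_sub, map_smul, smul_eq_mul]
    rw [this]
    have h1 := R.pol_pos hβ
    have h2 := R.pol_pos hαp
    nlinarith [hc, h1, h2]
  · push_neg at hip
    rcases R.pos_or_neg hmem with h | h
    · exact h
    exfalso
    have hβα : β - α ∈ R.pos := R.lemA hα hβ hne hip
    obtain ⟨n, hn⟩ := R.inner_int hαΔ hβΔ
    obtain ⟨m, hm⟩ := R.inner_int hβΔ hαΔ
    have hn1 : 1 ≤ n := by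
      have h0 : (0 : ℝ) < (n : ℝ) := by rw [← hn]; positivity
      have : (0 : ℤ) < n := by exact_mod_cast h0
      omega
    have hip' : (0:ℝ) < ⟪β, α⟫ := by rwa [real_inner_comm]
    have hB := R.inner_self_pos' hβΔ
    have hm1 : 1 ≤ m := by
      have h0 : (0 : ℝ) < (m : ℝ) := by rw [← hm]; positivity
      have : (0 : ℤ) < m := by exact_mod_cast h0
      omega
    have hnp : ∀ t : ℝ, β ≠ t • α := R.not_smul_of_pos hαp hβ hne
    -- n * m < 4, hence n ≤ 3
    have hα0 := R.ne_zero_of_mem hαΔ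
    have hβ0 := R.ne_zero_of_mem hβΔ
    have hna : (0:ℝ) < ‖α‖ := norm_pos_iff.2 hα0
    have hnb : (0:ℝ) < ‖β‖ := norm_pos_iff.2 hβ0
    have hcs : ⟪α, β⟫ < ‖α‖ * ‖β‖ := by
      refine inner_lt_norm_mul_iff_real.mpr ?_
      intro hcontra
      refine hnp (‖β‖ / ‖α‖) ?_
      rw [div_eq_inv_mul, mul_smul, hcontra, inv_smul_smul₀ hna.ne']
    have h4 : 4 * (⟪α, β⟫ * ⟪α, β⟫) < 4 * (⟪α, α⟫ * ⟪β, β⟫) := by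
      rw [real_inner_self_eq_norm_mul_norm, real_inner_self_eq_norm_mul_norm]
      nlinarith [hip, hcs]
    have heq : ((n * m : ℤ) : ℝ) * (⟪α, α⟫ * ⟪β, β⟫) = 4 * (⟪α, β⟫ * ⟪α, β⟫) := by
      push_cast
      rw [← hn, ← hm, real_inner_comm β α]
      field_simp
      ring
    have hnm : n * m < 4 := by
      have hABpos : (0:ℝ) < ⟪α, α⟫ * ⟪β, β⟫ := mul_pos hA hB
      have hlt : ((n * m : ℤ) : ℝ) < 4 := by nlinarith [heq, h4, hABpos]
      exact_mod_cast hlt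
    have hn3 : n ≤ 3 := by nlinarith [hn1, hm1, hnm]
    -- the inner product in terms of n
    have hipn : 2 * ⟪α, β⟫ = (n : ℝ) * ⟪α, α⟫ := by
      field_simp at hn
      linarith [hn]
    -- the negated reflected root
    have hγ : -(β - (2 * ⟪α, β⟫ / ⟪α, α⟫) • α) ∈ R.pos := h
    rw [hn] at hγ
    interval_cases n
    · -- n = 1 : -(β - α) ∈ pos contradicts β - α ∈ pos
      rw [show ((1:ℤ):ℝ) • α = α by norm_num] at hγ
      exact R.not_both hβα hγ
    · -- n = 2
      have hip2 : ⟪α, β⟫ = ⟪α, α⟫ := by push_cast at hipn; linarith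
      have hγ' : (2:ℝ) • α - β ∈ R.pos := by rwa [neg_sub, show ((2:ℤ):ℝ) = (2:ℝ) by norm_num] at hγ
      have hγα : (2:ℝ) • α - β ≠ α := by
        intro hcon
        rw [sub_eq_iff_eq_add, two_smul] at hcon
        exact hne (add_left_cancel hcon).symm
      have hipγ : 0 < ⟪α, (2:ℝ) • α - β⟫ := by
        rw [inner_sub_right, real_inner_smul_right, hip2]; linarith
      have h5 := R.lemA hα hγ' hγα hipγ
      have : (2:ℝ) • α - β - α = -(β - α) := by rw [two_smul]; abel
      rw [this] at h5
      exact R.not_both hβα h5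
    · -- n = 3
      have hip3 : 2 * ⟪α, β⟫ = 3 * ⟪α, α⟫ := by push_cast at hipn; linarith
      have hγ' : (3:ℝ) • α - β ∈ R.pos := by rwa [neg_sub, show ((3:ℤ):ℝ) = (3:ℝ) by norm_num] at hγ
      have hγα : (3:ℝ) • α - β ≠ α := by
        intro hcon
        rw [sub_eq_iff_eq_add, show (3:ℝ) = 1 + 2 by norm_num, add_smul, one_smul] at hcon
        exact hnp 2 (add_left_cancel hcon).symm
      have hipγ : 0 < ⟪α, (3:ℝ) • α - β⟫ := by
        rw [inner_sub_right, real_inner_smul_right]; linarith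
      have h5 := R.lemA hα hγ' hγα hipγ
      have h5' : (2:ℝ) • α - β ∈ R.pos := by
        rwa [show (3:ℝ) • α - β - α = (2:ℝ) • α - β by
          rw [show (3:ℝ) = 2 + 1 by norm_num, add_smul, one_smul]; abel] at h5
      have hγα2 : (2:ℝ) • α - β ≠ α := by
        intro hcon
        rw [sub_eq_iff_eq_add, two_smul] at hcon
        exact hne (add_left_cancel hcon).symm
      have hipγ2 : 0 < ⟪α, (2:ℝ) • α - β⟫ := by
        rw [inner_sub_right, real_inner_smul_right]; linarith
      have h6 := R.lemA hα h5' hγα2 hipγ2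
      have : (2:ℝ) • α - β - α = -(β - α) := by rw [two_smul]; abel
      rw [this] at h6
      exact R.not_both hβα h6

/-- Strong induction on the value of `pol` over positive roots. -/
lemma pol_induction {P : V → Prop}
    (h : ∀ β ∈ R.pos, (∀ γ ∈ R.pos, R.pol γ < R.pol β → P γ) → P β) :
    ∀ β ∈ R.pos, P β := by
  suffices H : ∀ n : ℕ, ∀ β ∈ R.pos,
      (R.pos.filter (fun γ => R.pol γ < R.pol β)).card ≤ n → P β by
    intro β hβ
    exact H _ β hβ le_rfl
  intro n
  induction n with
  | zero =>
    intro β hβ hc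
    refine h β hβ fun γ hγ hlt => absurd hc ?_
    have : γ ∈ R.pos.filter (fun γ => R.pol γ < R.pol β) := Finset.mem_filter.2 ⟨hγ, hlt⟩
    simp only [Nat.le_zero, Finset.card_eq_zero]
    intro hcon
    rw [hcon] at this
    exact absurd this (Finset.notMem_empty γ)
  | succ n ih =>
    intro β hβ hc
    refine h β hβ fun γ hγ hlt => ih γ hγ ?_
    have hsub : R.pos.filter (fun x => R.pol x < R.pol γ) ⊆
        R.pos.filter (fun x => R.pol x < R.pol β) := by
      intro x hx
      obtain ⟨h1, h2⟩ := Finset.mem_filter.1 hx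
      exact Finset.mem_filter.2 ⟨h1, h2.trans hlt⟩
    have hmem : γ ∈ R.pos.filter (fun x => R.pol x < R.pol β) := Finset.mem_filter.2 ⟨hγ, hlt⟩
    have hnot : γ ∉ R.pos.filter (fun x => R.pol x < R.pol γ) := by
      intro hcon
      exact absurd (Finset.mem_filter.1 hcon).2 (lt_irrefl _)
    have hlt' := Finset.card_lt_card (Finset.ssubset_iff_of_subset hsub |>.2 ⟨γ, hmem, hnot⟩)
    omega

lemma exists_simple_inner_pos {β : V} (hβ : β ∈ R.pos) : ∃ α ∈ R.simples, 0 < ⟪α, β⟫ := by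
  have cone : ∀ β ∈ R.pos, ∃ c : V → ℝ, (∀ γ, 0 ≤ c γ) ∧ β = ∑ γ ∈ R.simples, c γ • γ := by
    refine R.pol_induction ?_
    intro β hβ ih
    by_cases hs : β ∈ R.simples
    · refine ⟨fun γ => if γ = β then 1 else 0, fun γ => by dsimp only; split <;> norm_num, ?_⟩
      rw [Finset.sum_congr rfl (fun γ _ => by
        rw [ite_smul, one_smul, zero_smul] : ∀ γ ∈ R.simples,
          (if γ = β then (1:ℝ) else 0) • γ = if γ = β then γ else 0)]
      rw [Finset.sum_ite_eq' R.simples β (fun γ => γ), if_pos hs]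
    · have hdec : ∃ γ ∈ R.pos, ∃ δ ∈ R.pos, γ + δ = β := by
        by_contra hcon
        exact hs (Finset.mem_filter.2 ⟨hβ, hcon⟩)
      obtain ⟨γ, hγ, δ, hδ, hsum⟩ := hdec
      have hpolβ : R.pol β = R.pol γ + R.pol δ := by rw [← hsum, map_add]
      have h1 := R.pol_pos hγ
      have h2 := R.pol_pos hδ
      obtain ⟨c1, hc1, hr1⟩ := ih γ hγ (by linarith)
      obtain ⟨c2, hc2, hr2⟩ := ih δ hδ (by linarith)
      refine ⟨fun x => c1 x + c2 x, fun x => by dsimp only; linarith [hc1 x, hc2 x], ?_⟩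
      rw [← hsum, hr1, hr2, ← Finset.sum_add_distrib]
      exact Finset.sum_congr rfl fun x _ => by rw [add_smul]
  obtain ⟨c, hc, hrep⟩ := cone β hβ
  by_contra hno
  push_neg at hno
  have hle : ⟪β, β⟫ ≤ 0 := by
    have hswap : ⟪β, β⟫ = ⟪(∑ γ ∈ R.simples, c γ • γ : V), β⟫ := by rw [← hrep]
    rw [hswap, sum_inner]
    refine Finset.sum_nonpos fun γ hγ => ?_
    rw [real_inner_smul_left]
    exact mul_nonpos_iff.2 (Or.inl ⟨hc γ, hno γ hγ⟩)
  exact absurd hle (not_le.2 (R.inner_self_pos' (R.pos_subset hβ)))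

lemma all_pos_of_simples_pos {w : V ≃ₗ[ℝ] V} (hw : ∀ γ ∈ R.Δ, w γ ∈ R.Δ)
    (h : ∀ α ∈ R.simples, w α ∈ R.pos) : ∀ β ∈ R.pos, w β ∈ R.pos := by
  refine R.pol_induction ?_
  intro β hβ ih
  by_cases hs : β ∈ R.simples
  · exact h β hs
  · have hdec : ∃ γ ∈ R.pos, ∃ δ ∈ R.pos, γ + δ = β := by
      by_contra hcon
      exact hs (Finset.mem_filter.2 ⟨hβ, hcon⟩)
    obtain ⟨γ, hγ, δ, hδ, hsum⟩ := hdec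
    have hpolβ : R.pol β = R.pol γ + R.pol δ := by rw [← hsum, map_add]
    have h1 := R.pol_pos hγ
    have h2 := R.pol_pos hδ
    have hγ' := ih γ hγ (by linarith)
    have hδ' := ih δ hδ (by linarith)
    refine Finset.mem_filter.2 ⟨hw β (R.pos_subset hβ), ?_⟩
    have : w β = w γ + w δ := by rw [← hsum, map_add]
    rw [this, map_add]
    have := R.pol_pos hγ'
    have := R.pol_pos hδ'
    linarith

lemma len_def (w : V ≃ₗ[ℝ] V) :
    R.len w = (R.pos.filter (fun β => -(w β) ∈ R.pos)).card := rfl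

lemma N_erase {α : V} (hα : α ∈ R.simples) (w : V ≃ₗ[ℝ] V) :
    (R.pos.filter fun β => -((w * sref α) β) ∈ R.pos).erase α
      = ((R.pos.filter fun β => -(w β) ∈ R.pos).erase α).image (sref α) := by
  have hαp := R.simples_subset_pos hα
  ext γ
  simp only [Finset.mem_erase, Finset.mem_filter, Finset.mem_image]
  constructor
  · rintro ⟨hγα, hγpos, hγneg⟩
    refine ⟨sref α γ, ⟨?_, ?_, ?_⟩, sref_sref α γ⟩
    · intro hcon
      have hγeq := congrArg (sref α) hcon
      rw [sref_sref, sref_self α (R.ne_zero_of_mem (R.pos_subset hαp))] at hγeq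
      exact R.not_both hαp (hγeq ▸ hγpos)
    · exact R.key hα hγpos hγα
    · show -(w (sref α γ)) ∈ R.pos
      exact hγneg
  · rintro ⟨δ, ⟨hδα, hδpos, hδneg⟩, rfl⟩
    refine ⟨?_, R.key hα hδpos hδα, ?_⟩
    · intro hcon
      have hδeq := congrArg (sref α) hcon
      rw [sref_sref, sref_self α (R.ne_zero_of_mem (R.pos_subset hαp))] at hδeq
      exact R.not_both hαp (hδeq ▸ hδpos)
    · show -(w (sref α (sref α δ))) ∈ R.pos
      rwa [sref_sref]

lemma apply_mul_sref_self {α : V} (hα : α ∈ R.Δ) (w : V ≃ₗ[ℝ] V) :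
    (w * sref α) α = -(w α) := by
  show w (sref α α) = -(w α)
  rw [sref_self α (R.ne_zero_of_mem hα), map_neg]

lemma len_mul_sref_pos {α : V} {w : V ≃ₗ[ℝ] V} (hα : α ∈ R.simples)
    (hw : w α ∈ R.pos) : R.len (w * sref α) = R.len w + 1 := by
  have hαp := R.simples_subset_pos hα
  have hαΔ := R.pos_subset hαp
  set N := R.pos.filter (fun β => -(w β) ∈ R.pos) with hN
  set N' := R.pos.filter (fun β => -((w * sref α) β) ∈ R.pos) with hN'
  have hαN' : α ∈ N' := by
    rw [hN', Finset.mem_filter, R.apply_mul_sref_self hαΔ, neg_neg]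
    exact ⟨hαp, hw⟩
  have hαN : α ∉ N := by
    rw [hN, Finset.mem_filter]
    rintro ⟨-, hcon⟩
    exact R.not_both hw hcon
  have h1 : (N'.erase α).card + 1 = N'.card := Finset.card_erase_add_one hαN'
  have h2 : N'.erase α = (N.erase α).image (sref α) := R.N_erase hα w
  have h3 : (N.erase α).card = N.card := by rw [Finset.erase_eq_of_notMem hαN]
  have h4 : ((N.erase α).image (sref α)).card = (N.erase α).card :=
    Finset.card_image_of_injective _ (sref α).injective
  have h5 : (N'.erase α).card = ((N.erase α).image (sref α)).card := by rw [h2]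
  show N'.card = N.card + 1
  omega
  

lemma len_mul_sref_neg {α : V} {w : V ≃ₗ[ℝ] V} (hα : α ∈ R.simples)
    (hw : -(w α) ∈ R.pos) : R.len (w * sref α) + 1 = R.len w := by
  have hαp := R.simples_subset_pos hα
  have hαΔ := R.pos_subset hαp
  set N := R.pos.filter (fun β => -(w β) ∈ R.pos) with hN
  set N' := R.pos.filter (fun β => -((w * sref α) β) ∈ R.pos) with hN'
  have hαN : α ∈ N := Finset.mem_filter.2 ⟨hαp, hw⟩
  have hαN' : α ∉ N' := by
    rw [hN', Finset.mem_filter, R.apply_mul_sref_self hαΔ, neg_neg]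
    rintro ⟨-, hcon⟩
    exact R.not_both hcon hw
  have h1 : (N.erase α).card + 1 = N.card := Finset.card_erase_add_one hαN
  have h2 : N'.erase α = (N.erase α).image (sref α) := R.N_erase hα w
  have h3 : (N'.erase α).card = N'.card := by rw [Finset.erase_eq_of_notMem hαN']
  have h4 : ((N.erase α).image (sref α)).card = (N.erase α).card :=
    Finset.card_image_of_injective _ (sref α).injective
  have h5 : (N'.erase α).card = ((N.erase α).image (sref α)).card := by rw [h2]
  show N'.card + 1 = N.card
  omega

/-- Product of reflections along a list of roots. -/
def sprod (l : List V) : V ≃ₗ[ℝ] V := (l.map sref).prod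

lemma sprod_nil : sprod ([] : List V) = 1 := rfl

lemma sprod_cons (α : V) (t : List V) : sprod (α :: t) = sref α * sprod t := by
  rw [sprod, List.map_cons, List.prod_cons]; rfl

lemma sprod_append (l₁ l₂ : List V) : sprod (l₁ ++ l₂) = sprod l₁ * sprod l₂ := by
  rw [sprod, List.map_append, List.prod_append]; rfl

lemma sprod_singleton (α : V) : sprod [α] = sref α := by
  rw [sprod, List.map_cons, List.map_nil, List.prod_cons, List.prod_nil, mul_one]

lemma sprod_reverse (l : List V) : sprod l.reverse = (sprod l)⁻¹ := by
  induction l with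
  | nil => simp [sprod_nil]
  | cons α t ih =>
    rw [List.reverse_cons, sprod_append, ih, sprod_singleton, sprod_cons, mul_inv_rev,
      sref_inv]

lemma good_sprod {l : List V} (hl : ∀ α ∈ l, α ∈ R.Δ) :
    (∀ γ ∈ R.Δ, sprod l γ ∈ R.Δ) ∧ (∀ x y : V, ⟪sprod l x, sprod l y⟫ = ⟪x, y⟫) := by
  induction l with
  | nil => exact ⟨fun γ hγ => hγ, fun x y => rfl⟩
  | cons α t ih =>
    have hα : α ∈ R.Δ := hl α (List.mem_cons_self (a := α) (l := t))
    have ht : ∀ γ ∈ t, γ ∈ R.Δ := fun γ hγ => hl γ (List.mem_cons_of_mem α hγ)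
    obtain ⟨ih1, ih2⟩ := ih ht
    constructor
    · intro γ hγ
      rw [sprod_cons]
      exact R.sref_mem hα (ih1 γ hγ)
    · intro x y
      rw [sprod_cons]
      show ⟪sref α (sprod t x), sref α (sprod t y)⟫ = ⟪x, y⟫
      rw [inner_sref, ih2]

lemma sref_mem_closure_simples {β : V} (hβ : β ∈ R.pos) :
    sref β ∈ Subgroup.closure {g : V ≃ₗ[ℝ] V | IsReflectionIn R.simples g} := by
  revert hβ
  refine R.pol_induction (P := fun β => sref β ∈ Subgroup.closure
    {g : V ≃ₗ[ℝ] V | IsReflectionIn R.simples g}) ?_ β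
  intro β hβ ih
  by_cases hs : β ∈ R.simples
  · exact Subgroup.subset_closure ⟨β, hs, fun x => rfl⟩
  · obtain ⟨α, hα, hip⟩ := R.exists_simple_inner_pos hβ
    have hne : β ≠ α := fun h => hs (h ▸ hα)
    have hγ : sref α β ∈ R.pos := R.key hα hβ hne
    have hαp := R.simples_subset_pos hα
    have hlt : R.pol (sref α β) < R.pol β := by
      have hA := R.inner_self_pos' (R.pos_subset hαp)
      have hc : 0 < 2 * ⟪α, β⟫ / ⟪α, α⟫ := by positivity
      have : R.pol (sref α β) = R.pol β - (2 * ⟪α, β⟫ / ⟪α, α⟫) * R.pol α := by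
        rw [sref_apply, map_sub, map_smul, smul_eq_mul]
      rw [this]
      nlinarith [R.pol_pos hαp, hc]
    have ihγ := ih (sref α β) hγ hlt
    have hconj : sref (sref α β) = sref α * sref β * (sref α)⁻¹ :=
      sref_conj (sref α) (inner_sref α) β
    have hfinal : sref β = sref α * sref (sref α β) * sref α := by
      rw [hconj, sref_inv,
        show sref α * (sref α * sref β * sref α) * sref α
          = (sref α * sref α) * sref β * (sref α * sref α) by group,
        sref_mul_self, one_mul, mul_one]
    rw [hfinal]
    exact mul_mem (mul_mem (Subgroup.subset_closure ⟨α, hα, fun x => rfl⟩) ihγ)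
      (Subgroup.subset_closure ⟨α, hα, fun x => rfl⟩)

lemma weyl_le_simples :
    R.weyl ≤ Subgroup.closure {g : V ≃ₗ[ℝ] V | IsReflectionIn R.simples g} := by
  rw [weyl]
  refine (Subgroup.closure_le _).2 ?_
  rintro g ⟨α, hα, hg⟩
  have hgeq : g = sref α := LinearEquiv.ext fun x => by rw [hg x]; rfl
  rcases R.pos_or_neg hα with h | h
  · rw [hgeq]
    exact R.sref_mem_closure_simples h
  · rw [hgeq, ← sref_neg α]
    exact R.sref_mem_closure_simples h

lemma exists_word {w : V ≃ₗ[ℝ] V}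
    (hw : w ∈ Subgroup.closure {g : V ≃ₗ[ℝ] V | IsReflectionIn R.simples g}) :
    ∃ l : List V, (∀ α ∈ l, α ∈ R.simples) ∧ w = sprod l := by
  induction hw using Subgroup.closure_induction with
  | mem g hg =>
    obtain ⟨α, hα, hgf⟩ := hg
    refine ⟨[α], by simpa using hα, ?_⟩
    refine LinearEquiv.ext fun x => ?_
    rw [hgf x, sprod_singleton α]
    rfl
  | one => exact ⟨[], by simp, rfl⟩
  | mul a b _ _ iha ihb =>
    obtain ⟨la, hla, rfl⟩ := iha
    obtain ⟨lb, hlb, rfl⟩ := ihb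
    exact ⟨la ++ lb, fun α hα => by
      rcases List.mem_append.1 hα with h | h
      exacts [hla α h, hlb α h], (sprod_append la lb).symm⟩
  | inv a _ iha =>
    obtain ⟨l, hl, rfl⟩ := iha
    exact ⟨l.reverse, fun α hα => hl α (List.mem_reverse.1 hα), (sprod_reverse l).symm⟩

/-- The exchange lemma. -/
lemma exchange : ∀ l : List V, (∀ α ∈ l, α ∈ R.simples) → ∀ β ∈ R.pos,
    -(sprod l β) ∈ R.pos →
    ∃ l' : List V, (∀ α ∈ l', α ∈ R.simples) ∧ l'.length + 1 = l.length ∧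
      sprod l' = sprod l * sref β := by
  intro l
  induction l with
  | nil =>
    intro _ β hβ hneg
    exact absurd hneg (R.not_both hβ)
  | cons α t ih =>
    intro hl β hβ hneg
    have hα : α ∈ R.simples := hl α (List.mem_cons_self (a := α) (l := t))
    have ht : ∀ γ ∈ t, γ ∈ R.simples := fun γ hγ => hl γ (List.mem_cons_of_mem α hγ)
    have htΔ : ∀ γ ∈ t, γ ∈ R.Δ := fun γ hγ => R.pos_subset (R.simples_subset_pos (ht γ hγ))
    have hgood := R.good_sprod htΔ
    have huβΔ : sprod t β ∈ R.Δ := hgood.1 β (R.pos_subset hβ)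
    rw [sprod_cons] at hneg
    by_cases hc : -(sprod t β) ∈ R.pos
    · obtain ⟨t', ht', hlen, heq⟩ := ih ht β hβ hc
      refine ⟨α :: t', ?_, by simp [← hlen], ?_⟩
      · intro γ hγ
        rcases List.mem_cons.1 hγ with h | h
        exacts [h ▸ hα, ht' γ h]
      · rw [sprod_cons, heq, sprod_cons, mul_assoc]
    · have hu : sprod t β ∈ R.pos := (R.pos_or_neg huβΔ).resolve_right hc
      have heqα : sprod t β = α := by
        by_contra hne
        have hkey := R.key hα hu hne
        exact R.not_both hkey (by exact hneg)
      have hconj := sref_conj (sprod t) hgood.2 β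
      rw [heqα] at hconj
      refine ⟨t, ht, by simp, ?_⟩
      rw [sprod_cons, hconj,
        show sprod t * sref β * (sprod t)⁻¹ * sprod t * sref β
          = sprod t * (sref β * sref β) by group,
        sref_mul_self, mul_one]

lemma len_zero_maps_pos {w : V ≃ₗ[ℝ] V} (hwΔ : ∀ γ ∈ R.Δ, w γ ∈ R.Δ)
    (h0 : R.len w = 0) : ∀ β ∈ R.pos, w β ∈ R.pos := by
  intro β hβ
  rcases R.pos_or_neg (hwΔ β (R.pos_subset hβ)) with h | h
  · exact h
  · exfalso
    have hmem : β ∈ R.pos.filter (fun γ => -(w γ) ∈ R.pos) := Finset.mem_filter.2 ⟨hβ, h⟩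
    rw [len_def, Finset.card_eq_zero] at h0
    rw [h0] at hmem
    exact absurd hmem (Finset.notMem_empty β)

lemma surj_pos {w : V ≃ₗ[ℝ] V} (hw : ∀ β ∈ R.pos, w β ∈ R.pos) :
    ∀ α ∈ R.pos, ∃ β ∈ R.pos, w β = α := by
  have himg : R.pos.image w = R.pos := by
    refine Finset.eq_of_subset_of_card_le ?_ ?_
    · intro x hx
      obtain ⟨β, hβ, rfl⟩ := Finset.mem_image.1 hx
      exact hw β hβ
    · rw [Finset.card_image_of_injective _ w.injective]
  intro α hα
  obtain ⟨β, hβ, hβeq⟩ := Finset.mem_image.1 (show α ∈ R.pos.image w by rw [himg]; exact hα)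
  exact ⟨β, hβ, hβeq⟩

lemma word_len_zero : ∀ n : ℕ, ∀ l : List V, l.length ≤ n →
    (∀ α ∈ l, α ∈ R.simples) → R.len (sprod l) = 0 → sprod l = 1 := by
  intro n
  induction n with
  | zero =>
    intro l hlen _ _
    have : l = [] := List.eq_nil_of_length_eq_zero (Nat.le_zero.1 hlen)
    rw [this, sprod_nil]
  | succ n ih =>
    intro l hlen hl hw0
    match l with
    | [] => rw [sprod_nil]
    | α :: t =>
      have hα : α ∈ R.simples := hl α (List.mem_cons_self (a := α) (l := t))
      have ht : ∀ γ ∈ t, γ ∈ R.simples := fun γ hγ => hl γ (List.mem_cons_of_mem α hγ)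
      have hlΔ : ∀ γ ∈ α :: t, γ ∈ R.Δ :=
        fun γ hγ => R.pos_subset (R.simples_subset_pos (hl γ hγ))
      have htΔ : ∀ γ ∈ t, γ ∈ R.Δ := fun γ hγ => hlΔ γ (List.mem_cons_of_mem α hγ)
      have hwgood := R.good_sprod hlΔ
      have hugood := R.good_sprod htΔ
      have hαp := R.simples_subset_pos hα
      have hα0 : α ≠ (0:V) := R.ne_zero_of_mem (R.pos_subset hαp)
      have hwpos : ∀ β ∈ R.pos, sprod (α :: t) β ∈ R.pos :=
        R.len_zero_maps_pos hwgood.1 hw0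
      obtain ⟨β₀, hβ₀, hwβ₀⟩ := R.surj_pos hwpos α hαp
      -- the inversions of `sprod t` form exactly `{β₀}`
      have hts : ∀ γ : V, sprod t γ = sref α (sprod (α :: t) γ) := by
        intro γ
        rw [sprod_cons]
        show sprod t γ = sref α (sref α (sprod t γ))
        rw [sref_sref]
      have hNu : R.pos.filter (fun γ => -(sprod t γ) ∈ R.pos) = {β₀} := by
        ext γ
        simp only [Finset.mem_filter, Finset.mem_singleton]
        constructor
        · rintro ⟨hγ, hneg⟩
          have hwγ : sprod (α :: t) γ ∈ R.pos := hwpos γ hγ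
          have : sprod (α :: t) γ = α := by
            by_contra hne
            have hkey := R.key hα hwγ hne
            rw [hts γ] at hneg
            exact R.not_both hkey hneg
          have := this.trans hwβ₀.symm
          exact (sprod (α :: t)).injective this
        · intro hγeq
          rw [hγeq]
          refine ⟨hβ₀, ?_⟩
          rw [hts β₀, hwβ₀, sref_self α hα0, neg_neg]
          exact hαp
      have hlenu : R.len (sprod t) = 1 := by
        rw [len_def, hNu, Finset.card_singleton]
      have hdesc : ∃ δ ∈ R.simples, -(sprod t δ) ∈ R.pos := by
        by_contra hno
        push_neg at hno
        have hsimp : ∀ δ ∈ R.simples, sprod t δ ∈ R.pos := fun δ hδ =>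
          (R.pos_or_neg (hugood.1 δ (R.pos_subset (R.simples_subset_pos hδ)))).resolve_right
            (hno δ hδ)
        have hall := R.all_pos_of_simples_pos hugood.1 hsimp
        have : R.len (sprod t) = 0 := by
          rw [len_def, Finset.card_eq_zero, Finset.filter_eq_empty_iff]
          intro β hβ
          exact R.not_both (hall β hβ)
        omega
      obtain ⟨δ, hδ, hδneg⟩ := hdesc
      obtain ⟨t', ht', hlen', heq⟩ := R.exchange t ht δ (R.simples_subset_pos hδ) hδneg
      have hlent' : R.len (sprod t') = 0 := by
        rw [heq]
        have := R.len_mul_sref_neg hδ hδneg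
        omega
      have hlenok : t'.length ≤ n := by
        have h1 : (α :: t).length ≤ n + 1 := hlen
        simp only [List.length_cons] at h1
        omega
      have ht'1 : sprod t' = 1 := ih t' hlenok ht' hlent'
      have hu : sprod t = sref δ := by
        have hone : sprod t * sref δ = 1 := by rw [← heq, ht'1]
        have := eq_inv_of_mul_eq_one_left hone
        rwa [sref_inv] at this
      by_cases hAD : δ = α
      · rw [sprod_cons, hu, hAD]
        exact sref_mul_self α
      · exfalso
        have hδ0 : δ ≠ (0:V) := R.ne_zero_of_mem (R.pos_subset (R.simples_subset_pos hδ))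
        have hsd : sref α δ ∈ R.pos := R.key hα (R.simples_subset_pos hδ) hAD
        have hwδ : sprod (α :: t) δ = -(sref α δ) := by
          rw [sprod_cons]
          show sref α (sprod t δ) = _
          rw [hu, sref_self δ hδ0, map_neg]
        have hmem : δ ∈ R.pos.filter (fun γ => -(sprod (α :: t) γ) ∈ R.pos) := by
          refine Finset.mem_filter.2 ⟨R.simples_subset_pos hδ, ?_⟩
          rw [hwδ, neg_neg]
          exact hsd
        rw [len_def, Finset.card_eq_zero] at hw0
        rw [hw0] at hmem
        exact absurd hmem (Finset.notMem_empty δ)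

lemma posL_subset_pos : R.posL ⊆ R.pos := Finset.inter_subset_left

lemma short_long_ne {α β : V} (hα : α ∈ R.short) (hβ : β ∈ R.long) : β ≠ α := by
  rintro rfl
  obtain ⟨hβΔ, γ, hγ, hγlt⟩ := Finset.mem_filter.1 hβ
  have := (Finset.mem_filter.1 hα).2 γ hγ
  exact absurd hγlt (not_lt.2 this)

lemma sref_posL {α β : V} (hα : α ∈ R.simplesS) (hβ : β ∈ R.posL) : sref α β ∈ R.posL := by
  obtain ⟨hαs, hαshort⟩ := Finset.mem_inter.1 hα
  obtain ⟨hβp, hβl⟩ := Finset.mem_inter.1 hβ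
  have hne : β ≠ α := R.short_long_ne hαshort hβl
  have h1 : sref α β ∈ R.pos := R.key hαs hβp hne
  have h2 : sref α β ∈ R.long := by
    obtain ⟨hβΔ, γ, hγ, hγlt⟩ := Finset.mem_filter.1 hβl
    refine Finset.mem_filter.2 ⟨R.pos_subset h1, γ, hγ, ?_⟩
    rwa [norm_sref]
  exact Finset.mem_inter.2 ⟨h1, h2⟩

lemma short_or_long {α : V} (hα : α ∈ R.Δ) : α ∈ R.short ∨ α ∈ R.long := by
  by_cases h : ∀ β ∈ R.Δ, ‖α‖ ≤ ‖β‖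
  · exact Or.inl (Finset.mem_filter.2 ⟨hα, h⟩)
  · push_neg at h
    obtain ⟨β, hβ, hlt⟩ := h
    exact Or.inr (Finset.mem_filter.2 ⟨hα, β, hβ, hlt⟩)

/-- The subgroup of linear automorphisms preserving the long positive roots. -/
def posLStab : Subgroup (V ≃ₗ[ℝ] V) where
  carrier := {u : V ≃ₗ[ℝ] V | ∀ β ∈ R.posL, u β ∈ R.posL}
  one_mem' := fun β hβ => hβ
  mul_mem' := by
    intro a b ha hb β hβ
    exact ha _ (hb β hβ)
  inv_mem' := by
    intro u hu β hβ
    have himg : R.posL.image u = R.posL := by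
      refine Finset.eq_of_subset_of_card_le ?_ ?_
      · intro x hx
        obtain ⟨γ, hγ, rfl⟩ := Finset.mem_image.1 hx
        exact hu γ hγ
      · rw [Finset.card_image_of_injective _ u.injective]
    obtain ⟨γ, hγ, hγeq⟩ := Finset.mem_image.1
      (show β ∈ R.posL.image u by rw [himg]; exact hβ)
    have : u⁻¹ β = γ := by
      rw [← hγeq]
      exact u.symm_apply_apply γ
    rw [this]
    exact hγ

lemma weylS_le_posLStab : R.weylS ≤ R.posLStab := by
  rw [weylS]
  refine (Subgroup.closure_le _).2 ?_
  rintro g ⟨α, hα, hg⟩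
  have hgeq : g = sref α := LinearEquiv.ext fun x => by rw [hg x]; rfl
  rw [hgeq]
  intro β hβ
  exact R.sref_posL hα hβ

end RootSystemData

/-- For an irreducible root system with two root lengths, the subgroup
`W(Π_s)` generated by the short simple reflections consists exactly of those elements of
the Weyl group mapping every long positive root to a long positive root. -/
theorem statement4 {V : Type} [NormedAddCommGroup V] [InnerProductSpace ℝ V]
    [FiniteDimensional ℝ V] (R : RootSystemData V)
    (hirr : R.IsIrreducible) (h2 : R.TwoLengths) (hsp : R.Spans) :
    ∀ w : V ≃ₗ[ℝ] V, w ∈ R.weyl →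
      (w ∈ R.weylS ↔ ∀ α ∈ R.posL, w α ∈ R.posL) := by
  intro w hw
  constructor
  · intro hws
    exact R.weylS_le_posLStab hws
  · intro hpres
    have main : ∀ n : ℕ, ∀ u : V ≃ₗ[ℝ] V, u ∈ R.weyl →
        (∀ β ∈ R.posL, u β ∈ R.posL) → R.len u = n → u ∈ R.weylS := by
      intro n
      induction n using Nat.strong_induction_on with
      | _ n ih =>
        intro u hu hup hlen
        rcases Nat.eq_zero_or_pos n with rfl | hn
        · obtain ⟨l, hl, rfl⟩ := R.exists_word (R.weyl_le_simples hu)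
          rw [R.word_len_zero l.length l le_rfl hl hlen]
          exact one_mem _
        · have hugood : (∀ γ ∈ R.Δ, u γ ∈ R.Δ) := by
            obtain ⟨l, hl, rfl⟩ := R.exists_word (R.weyl_le_simples hu)
            exact (R.good_sprod fun γ hγ =>
              R.pos_subset (R.simples_subset_pos (hl γ hγ))).1
          have hdesc : ∃ α ∈ R.simples, -(u α) ∈ R.pos := by
            by_contra hno
            push_neg at hno
            have hsimp : ∀ α ∈ R.simples, u α ∈ R.pos := fun α hα =>
              (R.pos_or_neg (hugood α (R.pos_subset (R.simples_subset_pos hα)))).resolve_right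
                (hno α hα)
            have hall := R.all_pos_of_simples_pos hugood hsimp
            have : R.len u = 0 := by
              rw [R.len_def, Finset.card_eq_zero, Finset.filter_eq_empty_iff]
              intro β hβ
              exact R.not_both (hall β hβ)
            omega
          obtain ⟨α, hα, hneg⟩ := hdesc
          have hαp := R.simples_subset_pos hα
          have hαΔ := R.pos_subset hαp
          have hshort : α ∈ R.short := by
            rcases R.short_or_long hαΔ with h | h
            · exact h
            · exfalso
              have hposL : α ∈ R.posL := Finset.mem_inter.2 ⟨hαp, h⟩
              have := hup α hposL
              exact R.not_both (R.posL_subset_pos this) hneg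
          have hαS : α ∈ R.simplesS := Finset.mem_inter.2 ⟨hα, hshort⟩
          have hlen' : R.len (u * RootSystemData.sref α) + 1 = R.len u :=
            R.len_mul_sref_neg hα hneg
          have hmem' : u * RootSystemData.sref α ∈ R.weyl :=
            mul_mem hu (Subgroup.subset_closure ⟨α, hαΔ, fun x => rfl⟩)
          have hup' : ∀ β ∈ R.posL, (u * RootSystemData.sref α) β ∈ R.posL := by
            intro β hβ
            show u (RootSystemData.sref α β) ∈ R.posL
            exact hup _ (R.sref_posL hαS hβ)
          have hws' := ih (R.len (u * RootSystemData.sref α)) (by omega) _ hmem' hup' rfl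
          have hueq : u = (u * RootSystemData.sref α) * RootSystemData.sref α := by
            rw [mul_assoc, RootSystemData.sref_mul_self, mul_one]
          rw [hueq]
          exact mul_mem hws' (Subgroup.subset_closure ⟨α, hαS, fun x => rfl⟩)
    exact main (R.len w) w hw hpres rfl
end
end
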